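/- arXiv:2012.12385 — 4 statements merged into one kernel-verified Lean document; each statement's English description precedes it below -/
import Mathlib

section
/- Let A, B, C be noncollinear points on a circle Γ in the Euclidean plane, let D be a point not on Γ and not on any of the lines BC, CA, AB, let r > 0, and write ι for the inversion with center D and radius r. Let A_p, B_p, C_p be the poles of the lines BC, CA, AB (i.e. A_p = ι(F) where F is the orthogonal projection of D onto line BC, and similarly for B_p, C_p), assume A_p, B_p, C_p are noncollinear, and let Γ_p be the circle through A_p, B_p, C_p. Let A₁ be a point of Γ with A₁ ≠ D; let B₁ᵖ and C₁ᵖ be two distinct points of Γ_p lying on the polar of A₁, each distinct from D; let C₁ be a point of Γ with C₁ ≠ A₁ lying on the polar of B₁ᵖ, and let B₁ be a point of Γ with B₁ ≠ A₁ lying on the polar of C₁ᵖ. Assume B₁ ≠ C₁ and D does not lie on the line B₁C₁. Then the pole of the line B₁C₁ (the point ι(F₁), where F₁ is the orthogonal projection of D onto line B₁C₁) lies on Γ_p. -/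
set_option maxHeartbeats 4000000
set_option linter.unusedVariables false


open EuclideanGeometry

noncomputable section

/-- The Euclidean plane. -/
abbrev Pt : Type := EuclideanSpace ℝ (Fin 2)

/-- The line (affine span) through two points. -/
def L (X Y : Pt) : AffineSubspace ℝ Pt := affineSpan ℝ {X, Y}

/-- `F` is the orthogonal projection (foot of the perpendicular) of `D` onto the line `XY`. -/
def IsFoot (D X Y F : Pt) : Prop := F ∈ L X Y ∧ (inner ℝ (D - F) (X - Y) : ℝ) = 0

/-- The inversion with center `D` and radius `r`. -/
def invPt (D : Pt) (r : ℝ) (X : Pt) : Pt := D + (r ^ 2 / ‖X - D‖ ^ 2) • (X - D)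

/-- The polar of a point `P ≠ D` w.r.t. the inversion circle of center `D`, radius `r`. -/
def polar (D : Pt) (r : ℝ) (P : Pt) : Set Pt := {X | (inner ℝ (X - invPt D r P) (P - D) : ℝ) = 0}

/- ===== auxiliary lemmas ===== -/

lemma inner2 (x y : Pt) : (inner ℝ x y : ℝ) = x 0 * y 0 + x 1 * y 1 := by
  simp only [PiLp.inner_apply, Fin.sum_univ_two, RCLike.inner_apply, conj_trivial]; ring

lemma normsq2 (x : Pt) : ‖x‖^2 = (x 0)^2 + (x 1)^2 := by
  rw [← real_inner_self_eq_norm_sq, inner2]; ring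

lemma pt_ext {x y : Pt} (h0 : x 0 = y 0) (h1 : x 1 = y 1) : x = y := by
  apply WithLp.ofLp_injective 2; funext i; fin_cases i <;> assumption

lemma pt_ne {x y : Pt} (h : x ≠ y) : ¬ (x 0 = y 0 ∧ x 1 = y 1) := by
  rintro ⟨h0, h1⟩; exact h (pt_ext h0 h1)

lemma sumsq_ne {x y : ℝ} (h : ¬ (x = 0 ∧ y = 0)) : x^2 + y^2 ≠ 0 := by
  intro hs
  exact h ⟨by nlinarith [sq_nonneg x, sq_nonneg y], by nlinarith [sq_nonneg x, sq_nonneg y]⟩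

lemma sumsq_eq {x y : ℝ} (h : x^2 + y^2 = 0) : x = 0 ∧ y = 0 :=
  ⟨by nlinarith [sq_nonneg x, sq_nonneg y], by nlinarith [sq_nonneg x, sq_nonneg y]⟩

/-- a line meets a circle in at most two points (scalar coordinates form) -/
lemma three_pts (v1 v2 c1 c2 kk r2 x1 x2 y1 y2 z1 z2 : ℝ)
    (hv : v1^2 + v2^2 ≠ 0)
    (hx : v1*x1 + v2*x2 = r2) (hy : v1*y1 + v2*y2 = r2) (hz : v1*z1 + v2*z2 = r2)
    (hcx : x1^2 + x2^2 - 2*(x1*c1 + x2*c2) + kk = 0)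
    (hcy : y1^2 + y2^2 - 2*(y1*c1 + y2*c2) + kk = 0)
    (hcz : z1^2 + z2^2 - 2*(z1*c1 + z2*c2) + kk = 0) :
    (x1 = y1 ∧ x2 = y2) ∨ (x1 = z1 ∧ x2 = z2) ∨ (y1 = z1 ∧ y2 = z2) := by
  by_cases hL : v1*(x2-y2) - v2*(x1-y1) = 0
  · left
    constructor
    · have h1 : (v1^2+v2^2)*(x1-y1) = 0 := by linear_combination v1*hx - v1*hy - v2*hL
      have := (mul_eq_zero.mp h1).resolve_left hv; linarith
    · have h2 : (v1^2+v2^2)*(x2-y2) = 0 := by linear_combination v2*hx - v2*hy + v1*hL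
      have := (mul_eq_zero.mp h2).resolve_left hv; linarith
  by_cases hM : v1*(x2-z2) - v2*(x1-z1) = 0
  · right; left
    constructor
    · have h1 : (v1^2+v2^2)*(x1-z1) = 0 := by linear_combination v1*hx - v1*hz - v2*hM
      have := (mul_eq_zero.mp h1).resolve_left hv; linarith
    · have h2 : (v1^2+v2^2)*(x2-z2) = 0 := by linear_combination v2*hx - v2*hz + v1*hM
      have := (mul_eq_zero.mp h2).resolve_left hv; linarith
  right; right
  have hLGy : (v1*(x2-y2) - v2*(x1-y1)) * (v1*(x2+y2-2*c2) - v2*(x1+y1-2*c1)) = 0 := by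
    linear_combination (v1^2+v2^2)*hcx - (v1^2+v2^2)*hcy
      - (v1*(x1+y1-2*c1)+v2*(x2+y2-2*c2))*hx + (v1*(x1+y1-2*c1)+v2*(x2+y2-2*c2))*hy
  have hLGz : (v1*(x2-z2) - v2*(x1-z1)) * (v1*(x2+z2-2*c2) - v2*(x1+z1-2*c1)) = 0 := by
    linear_combination (v1^2+v2^2)*hcx - (v1^2+v2^2)*hcz
      - (v1*(x1+z1-2*c1)+v2*(x2+z2-2*c2))*hx + (v1*(x1+z1-2*c1)+v2*(x2+z2-2*c2))*hz
  have hGy := (mul_eq_zero.mp hLGy).resolve_left hL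
  have hGz := (mul_eq_zero.mp hLGz).resolve_left hM
  constructor
  · have h1 : (v1^2+v2^2)*(y1-z1) = 0 := by
      linear_combination v1*hy - v1*hz - v2*hGy + v2*hGz
    have := (mul_eq_zero.mp h1).resolve_left hv; linarith
  · have h2 : (v1^2+v2^2)*(y2-z2) = 0 := by
      linear_combination v2*hy - v2*hz + v1*hGy - v1*hGz
    have := (mul_eq_zero.mp h2).resolve_left hv; linarith

/-- stereographic bridge -/
lemma bridge (e1 e2 n1 n2 x1 x2 s be : ℝ) (hbe : be ≠ 0)
    (hbeta : (x1-e1)*n1 + (x2-e2)*n2 = be)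
    (hs : s*be = -(x1-e1)*n2 + (x2-e2)*n1)
    (hbd : be = (x1-e1)^2 + (x2-e2)^2) :
    x1*(1+s^2) = e1*(1+s^2)+n1-s*n2 ∧ x2*(1+s^2) = e2*(1+s^2)+n2+s*n1 := by
  have hb2 : be^2 ≠ 0 := pow_ne_zero 2 hbe
  constructor
  · refine mul_right_cancel₀ hb2 ?_
    linear_combination (-(be*(x1-e1)) + s*be*(x2-e2))*hbeta + (be*(x2-e2) + s*be*(x1-e1))*hs
      + (-(be*n1) + s*be*n2)*hbd
  · refine mul_right_cancel₀ hb2 ?_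
    linear_combination (-(be*(x2-e2)) - s*be*(x1-e1))*hbeta + (-(be*(x1-e1)) + s*be*(x2-e2))*hs
      + (-(be*n2) - s*be*n1)*hbd

/-- transfer of N to the biquadratic Q -/
lemma NQ (e1 e2 n1 n2 w1 w2 m r2 s t x1 x2 y1 y2 : ℝ)
    (hx1 : x1*(1+s^2) = e1*(1+s^2)+n1-s*n2) (hx2 : x2*(1+s^2) = e2*(1+s^2)+n2+s*n1)
    (hy1 : y1*(1+t^2) = e1*(1+t^2)+n1-t*n2) (hy2 : y2*(1+t^2) = e2*(1+t^2)+n2+t*n1) :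
    (1+s^2)^2*(1+t^2)^2*(r2^2*((x1-y1)^2+(x2-y2)^2) - 2*r2*(x1*y2-x2*y1)*((x1-y1)*w2-(x2-y2)*w1) + m*(x1*y2-x2*y1)^2)
    = (s-t)^2 * ( (1*n2^2*r2^2 + 1*n1^2*r2^2 + (-2)*e2*n2^2*w2*r2 + (-2)*e2*n1*n2*w1*r2 + 1*e2^2*n2^2*m + (-2)*e1*n1*n2*w2*r2 + (-2)*e1*n1^2*w1*r2 + 2*e1*e2*n1*n2*m + 1*e1^2*n1^2*m)*s^2*t^2 + ((-2)*e2*n2^2*w1*r2 + 4*e2*n1*n2*w2*r2 + 2*e2*n1^2*w1*r2 + (-2)*e2^2*n1*n2*m + (-2)*e1*n2^2*w2*r2 + (-4)*e1*n1*n2*w1*r2 + 2*e1*n1^2*w2*r2 + 2*e1*e2*n2^2*m + (-2)*e1*e2*n1^2*m + 2*e1^2*n1*n2*m)*s*t*(s+t) + (1*n2^2*r2^2 + 1*n1^2*r2^2 + 2*e2*n1*n2*w1*r2 + (-2)*e2*n1^2*w2*r2 + 1*e2^2*n1^2*m + (-2)*e1*n2^2*w1*r2 + 2*e1*n1*n2*w2*r2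 + (-2)*e1*e2*n1*n2*m + 1*e1^2*n2^2*m)*(s^2+t^2) + (2*n2^3*w2*r2 + 2*n1*n2^2*w1*r2 + 2*n1^2*n2*w2*r2 + 2*n1^3*w1*r2 + 4*e2*n2^2*w2*r2 + (-2)*e2*n2^3*m + 8*e2*n1*n2*w1*r2 + (-4)*e2*n1^2*w2*r2 + (-2)*e2*n1^2*n2*m + (-2)*e2^2*n2^2*m + 2*e2^2*n1^2*m + (-4)*e1*n2^2*w1*r2 + 8*e1*n1*n2*w2*r2 + (-2)*e1*n1*n2^2*m + 4*e1*n1^2*w1*r2 + (-2)*e1*n1^3*m + (-8)*e1*e2*n1*n2*m + 2*e1^2*n2^2*m + (-2)*e1^2*n1^2*m)*s*t + (2*n2^3*w1*r2 + (-2)*n1*n2^2*w2*r2 + 2*n1^2*n2*w1*r2 + (-2)*n1^3*w2*r2 + 2*e2*n2^2*w1*r2 + (-4)*e2*n1*n2*w2*r2 + 2*e2*n1*n2^2*m + (-2)*e2*n1^2*w1*r2 + 2*e2*n1^3*m + 2*e2^2*n1*n2*m + 2*e1*n2^2*w2*r2 + (-2)*e1*n2^3*m + 4*e1*n1*n2*w1*r2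 + (-2)*e1*n1^2*w2*r2 + (-2)*e1*n1^2*n2*m + (-2)*e1*e2*n2^2*m + 2*e1*e2*n1^2*m + (-2)*e1^2*n1*n2*m)*(s+t) + (1*n2^2*r2^2 + (-2)*n2^3*w2*r2 + 1*n2^4*m + (-2)*n1*n2^2*w1*r2 + 1*n1^2*r2^2 + (-2)*n1^2*n2*w2*r2 + 2*n1^2*n2^2*m + (-2)*n1^3*w1*r2 + 1*n1^4*m + (-2)*e2*n2^2*w2*r2 + 2*e2*n2^3*m + (-2)*e2*n1*n2*w1*r2 + 2*e2*n1^2*n2*m + 1*e2^2*n2^2*m + (-2)*e1*n1*n2*w2*r2 + 2*e1*n1*n2^2*m + (-2)*e1*n1^2*w1*r2 + 2*e1*n1^3*m + 2*e1*e2*n1*n2*m + 1*e1^2*n1^2*m) ) := by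
  have c1 : (1+s^2)*(1+t^2)*(x1-y1) = ( (1+t^2)*(e1*(1+s^2)+n1-s*n2) - (1+s^2)*(e1*(1+t^2)+n1-t*n2) ) := by
    linear_combination (1+t^2)*hx1 - (1+s^2)*hy1
  have c2 : (1+s^2)*(1+t^2)*(x2-y2) = ( (1+t^2)*(e2*(1+s^2)+n2+s*n1) - (1+s^2)*(e2*(1+t^2)+n2+t*n1) ) := by
    linear_combination (1+t^2)*hx2 - (1+s^2)*hy2
  have c3 : (1+s^2)*(1+t^2)*(x1*y2-x2*y1) = ( (e1*(1+s^2)+n1-s*n2)*(e2*(1+t^2)+n2+t*n1) - (e2*(1+s^2)+n2+s*n1)*(e1*(1+t^2)+n1-t*n2) ) := by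
    linear_combination (y2*(1+t^2))*hx1 + (e1*(1+s^2)+n1-s*n2)*hy2
      - (y1*(1+t^2))*hx2 - (e2*(1+s^2)+n2+s*n1)*hy1
  linear_combination (r2^2*(((1+s^2)*(1+t^2)*(x1-y1))+( (1+t^2)*(e1*(1+s^2)+n1-s*n2) - (1+s^2)*(e1*(1+t^2)+n1-t*n2) )) - 2*r2*w2*((1+s^2)*(1+t^2)*(x1*y2-x2*y1)))*c1
    + (r2^2*(((1+s^2)*(1+t^2)*(x2-y2))+( (1+t^2)*(e2*(1+s^2)+n2+s*n1) - (1+s^2)*(e2*(1+t^2)+n2+t*n1) )) + 2*r2*w1*((1+s^2)*(1+t^2)*(x1*y2-x2*y1)))*c2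
    + (m*(((1+s^2)*(1+t^2)*(x1*y2-x2*y1))+( (e1*(1+s^2)+n1-s*n2)*(e2*(1+t^2)+n2+t*n1) - (e2*(1+s^2)+n2+s*n1)*(e1*(1+t^2)+n1-t*n2) )) - 2*r2*(w2*( (1+t^2)*(e1*(1+s^2)+n1-s*n2) - (1+s^2)*(e1*(1+t^2)+n1-t*n2) )-w1*( (1+t^2)*(e2*(1+s^2)+n2+s*n1) - (1+s^2)*(e2*(1+t^2)+n2+t*n1) )))*c3

/-- transfer for the leading coefficient A(s) -/
lemma NA (e1 e2 n1 n2 w1 w2 m r2 s x1 x2 : ℝ)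
    (hx1 : x1*(1+s^2) = e1*(1+s^2)+n1-s*n2) (hx2 : x2*(1+s^2) = e2*(1+s^2)+n2+s*n1) :
    (1+s^2)^2*(r2^2*((x1-e1)^2+(x2-e2)^2) - 2*r2*(x1*e2-x2*e1)*((x1-e1)*w2-(x2-e2)*w1) + m*(x1*e2-x2*e1)^2)
    = (1*n2^2*r2^2 + 1*n1^2*r2^2 + (-2)*e2*n2^2*w2*r2 + (-2)*e2*n1*n2*w1*r2 + 1*e2^2*n2^2*m + (-2)*e1*n1*n2*w2*r2 + (-2)*e1*n1^2*w1*r2 + 2*e1*e2*n1*n2*m + 1*e1^2*n1^2*m)*s^2 + ((-2)*e2*n2^2*w1*r2 + 4*e2*n1*n2*w2*r2 + 2*e2*n1^2*w1*r2 + (-2)*e2^2*n1*n2*m + (-2)*e1*n2^2*w2*r2 + (-4)*e1*n1*n2*w1*r2 + 2*e1*n1^2*w2*r2 + 2*e1*e2*n2^2*m + (-2)*e1*e2*n1^2*m + 2*e1^2*n1*n2*m)*s + (1*n2^2*r2^2 + 1*n1^2*r2^2 + 2*e2*n1*n2*w1*r2 + (-2)*e2*n1^2*w2*r2 + 1*e2^2*n1^2*m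 + (-2)*e1*n2^2*w1*r2 + 2*e1*n1*n2*w2*r2 + (-2)*e1*e2*n1*n2*m + 1*e1^2*n2^2*m) := by
  have c1 : (1+s^2)*(x1-e1) = n1-s*n2 := by linear_combination hx1
  have c2 : (1+s^2)*(x2-e2) = n2+s*n1 := by linear_combination hx2
  have c3 : (1+s^2)*(x1*e2-x2*e1) = e2*(n1-s*n2)-e1*(n2+s*n1) := by
    linear_combination e2*hx1 - e1*hx2
  linear_combination (r2^2*((1+s^2)*(x1-e1)+(n1-s*n2)) - 2*r2*w2*((1+s^2)*(x1*e2-x2*e1)))*c1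
    + (r2^2*((1+s^2)*(x2-e2)+(n2+s*n1)) + 2*r2*w1*((1+s^2)*(x1*e2-x2*e1)))*c2
    + (m*((1+s^2)*(x1*e2-x2*e1)+(e2*(n1-s*n2)-e1*(n2+s*n1)))
       - 2*r2*(w2*(n1-s*n2)-w1*(n2+s*n1)))*c3


lemma biquad_porism (q0 q1 q2 q3 q4 q5 a b c u v w : ℝ)
    (hab : a ≠ b) (hbc : b ≠ c) (hca : c ≠ a)
    (hQab : q0*a^2*b^2 + q1*a*b*(a+b) + q2*(a^2+b^2) + q3*a*b + q4*(a+b) + q5 = 0)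
    (hQbc : q0*b^2*c^2 + q1*b*c*(b+c) + q2*(b^2+c^2) + q3*b*c + q4*(b+c) + q5 = 0)
    (hQca : q0*c^2*a^2 + q1*c*a*(c+a) + q2*(c^2+a^2) + q3*c*a + q4*(c+a) + q5 = 0)
    (hQuv : q0*u^2*v^2 + q1*u*v*(u+v) + q2*(u^2+v^2) + q3*u*v + q4*(u+v) + q5 = 0)
    (hQuw : q0*u^2*w^2 + q1*u*w*(u+w) + q2*(u^2+w^2) + q3*u*w + q4*(u+w) + q5 = 0)
    (hvw : v ≠ w)
    (hA : q0*u^2 + q1*u + q2 ≠ 0) :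
    q0*v^2*w^2 + q1*v*w*(v+w) + q2*(v^2+w^2) + q3*v*w + q4*(v+w) + q5 = 0 := by
  have hD : ((a-b)*(b-c)*(c-a)) ≠ 0 :=
    mul_ne_zero (mul_ne_zero (sub_ne_zero.mpr hab) (sub_ne_zero.mpr hbc)) (sub_ne_zero.mpr hca)
  have hvw' : v - w ≠ 0 := sub_ne_zero.mpr hvw
  have hq3 : q3 = -(q0*(a*b+a*c+b*c)) - q1*(a+b+c) + q2 := by
    refine mul_right_cancel₀ hD ?_
    linear_combination (b-a)*hQab + (c-b)*hQbc + (a-c)*hQca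
  have hq4 : q4 = q0*(a*b*c) - q2*(a+b+c) := by
    refine mul_right_cancel₀ hD ?_
    linear_combination c*(a-b)*hQab + a*(b-c)*hQbc + b*(c-a)*hQca
  have hq5 : q5 = q1*(a*b*c) + q2*(a*b+a*c+b*c) := by
    refine mul_right_cancel₀ hD ?_
    linear_combination c^2*(b-a)*hQab + a^2*(c-b)*hQbc + b^2*(a-c)*hQca
  have hd1 : (q0*u^2+q1*u+q2)*(v+w) + (q1*u^2+q3*u+q4) = 0 := by
    refine mul_right_cancel₀ hvw' ?_
    linear_combination hQuv - hQuw
  have hd2 : (q0*u^2+q1*u+q2)*(v*w) - (q2*u^2+q4*u+q5) = 0 := by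
    linear_combination v*hd1 - hQuv
  have key : (q0*u^2+q1*u+q2)^2 * (q0*v^2*w^2 + q1*v*w*(v+w) + q2*(v^2+w^2) + q3*v*w + q4*(v+w) + q5) = 0 := by
    linear_combination
      (q2*((q0*u^2+q1*u+q2)*(v+w) + (q1*u^2+q3*u+q4)) + q4*(q0*u^2+q1*u+q2)
        - 2*q2*(q1*u^2+q3*u+q4) + q1*((q0*u^2+q1*u+q2)*(v*w) - (q2*u^2+q4*u+q5))
        + q1*(q2*u^2+q4*u+q5)) * hd1
      + (q3*(q0*u^2+q1*u+q2) - 2*q2*(q0*u^2+q1*u+q2) - q1*(q1*u^2+q3*u+q4)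
        + q0*((q0*u^2+q1*u+q2)*(v*w) - (q2*u^2+q4*u+q5)) + 2*q0*(q2*u^2+q4*u+q5)) * hd2
      + (1*q2*q5 + 2*q2*q4*u + 1*q2*q3*u^2 + 2*q2^2*u^2 + (-1)*q1*q4*u^2 + 2*q1*q2*u^3 + (-1)*q1*q2*c*u^2 + (-1)*q1*q2*b*u^2 + (-1)*q1*q2*a*u^2 + 1*q0*q5*u^2 + 1*q0*q2*u^4 + (-1)*q0*q2*b*c*u^2 + (-1)*q0*q2*a*c*u^2 + (-1)*q0*q2*a*b*u^2) * hq3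
      + ((-1)*q1*q5 + (-2)*q1*q4*u + (-3)*q1*q2*u^2 + (-2)*q1^2*u^3 + 1*q1^2*c*u^2 + 1*q1^2*b*u^2 + 1*q1^2*a*u^2 + 2*q0*q5*u + (-2)*q0*q2*b*c*u + (-2)*q0*q2*a*c*u + (-2)*q0*q2*a*b*u + (-1)*q0*q1*u^4 + 1*q0*q1*b*c*u^2 + 1*q0*q1*a*c*u^2 + 1*q0*q1*a*b*u^2 + (-2)*q0*q1*a*b*c*u) * hq4
      + (1*q0*q5 + 3*q0*q2*u^2 + (-2)*q0*q2*c*u + (-2)*q0*q2*b*u + (-2)*q0*q2*a*u + 2*q0*q1*u^3 + (-1)*q0*q1*c*u^2 + (-1)*q0*q1*b*u^2 + (-1)*q0*q1*a*u^2 + 1*q0^2*u^4 + (-1)*q0^2*b*c*u^2 + (-1)*q0^2*a*c*u^2 + (-1)*q0^2*a*b*u^2 + 2*q0^2*a*b*c*u) * hq5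
  exact (mul_eq_zero.mp key).resolve_left (pow_ne_zero 2 hA)
lemma scalar_main (o1 o2 rr w1 w2 m r2 e1 e2 pa1 pa2 pb1 pb2 pc1 pc2 qa1 qa2 qb1 qb2 qc1 qc2 bp1 bp2 cp1 cp2 : ℝ)
    (hr2 : r2 ≠ 0)
    (hcA : (pa1-o1)^2+(pa2-o2)^2 = rr)
    (hcB : (pb1-o1)^2+(pb2-o2)^2 = rr)
    (hcC : (pc1-o1)^2+(pc2-o2)^2 = rr)
    (hcA1 : (qa1-o1)^2+(qa2-o2)^2 = rr)
    (hcB1 : (qb1-o1)^2+(qb2-o2)^2 = rr)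
    (hcC1 : (qc1-o1)^2+(qc2-o2)^2 = rr)
    (hcE : (e1-o1)^2+(e2-o2)^2 = rr)
    (hpB : bp1^2+bp2^2-2*(bp1*w1+bp2*w2)+m = 0)
    (hpC : cp1^2+cp2^2-2*(cp1*w1+cp2*w2)+m = 0)
    (hba : bp1*qa1+bp2*qa2 = r2) (hbc : bp1*qc1+bp2*qc2 = r2)
    (hda : cp1*qa1+cp2*qa2 = r2) (hdb : cp1*qb1+cp2*qb2 = r2)
    (hNbc : (r2^2*((pb1-pc1)^2+(pb2-pc2)^2) - 2*r2*(pb1*pc2-pb2*pc1)*((pb1-pc1)*w2-(pb2-pc2)*w1) + m*(pb1*pc2-pb2*pc1)^2) = 0)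
    (hNca : (r2^2*((pc1-pa1)^2+(pc2-pa2)^2) - 2*r2*(pc1*pa2-pc2*pa1)*((pc1-pa1)*w2-(pc2-pa2)*w1) + m*(pc1*pa2-pc2*pa1)^2) = 0)
    (hNab : (r2^2*((pa1-pb1)^2+(pa2-pb2)^2) - 2*r2*(pa1*pb2-pa2*pb1)*((pa1-pb1)*w2-(pa2-pb2)*w1) + m*(pa1*pb2-pa2*pb1)^2) = 0)
    (dAB : ¬(pa1 = pb1 ∧ pa2 = pb2))
    (dBC : ¬(pb1 = pc1 ∧ pb2 = pc2))
    (dCA : ¬(pc1 = pa1 ∧ pc2 = pa2))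
    (dC1A1 : ¬(qc1 = qa1 ∧ qc2 = qa2))
    (dB1A1 : ¬(qb1 = qa1 ∧ qb2 = qa2))
    (dB1C1 : ¬(qb1 = qc1 ∧ qb2 = qc2))
    (dEA : ¬(e1 = pa1 ∧ e2 = pa2))
    (dEB : ¬(e1 = pb1 ∧ e2 = pb2))
    (dEC : ¬(e1 = pc1 ∧ e2 = pc2))
    (dEA1 : ¬(e1 = qa1 ∧ e2 = qa2))
    (dEB1 : ¬(e1 = qb1 ∧ e2 = qb2))
    (dEC1 : ¬(e1 = qc1 ∧ e2 = qc2))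
    (dbpcp : ¬(bp1 = cp1 ∧ bp2 = cp2))
    (hbp0 : ¬(bp1 = 0 ∧ bp2 = 0)) (hcp0 : ¬(cp1 = 0 ∧ cp2 = 0)) (ha10 : ¬(qa1 = 0 ∧ qa2 = 0)) :
    (r2^2*((qb1-qc1)^2+(qb2-qc2)^2) - 2*r2*(qb1*qc2-qb2*qc1)*((qb1-qc1)*w2-(qb2-qc2)*w1) + m*(qb1*qc2-qb2*qc1)^2) = 0 := by
  have hSa : qa1^2+qa2^2 ≠ 0 := sumsq_ne ha10
  have hcrC1 : qa1*qc2 - qa2*qc1 ≠ 0 := by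
    intro hcr
    have hc1 : qc1*(qa1^2+qa2^2) = (qa1*qc1+qa2*qc2)*qa1 := by linear_combination (-qa2)*hcr
    have hc2 : qc2*(qa1^2+qa2^2) = (qa1*qc1+qa2*qc2)*qa2 := by linear_combination qa1*hcr
    have hr : (qa1*qc1+qa2*qc2)*r2 = (qa1^2+qa2^2)*r2 := by
      linear_combination (qa1^2+qa2^2)*hbc - bp1*hc1 - bp2*hc2 - (qa1*qc1+qa2*qc2)*hba
    have hac : qa1*qc1+qa2*qc2 = qa1^2+qa2^2 := mul_right_cancel₀ hr2 hr
    have e1' : qc1*(qa1^2+qa2^2) = qa1*(qa1^2+qa2^2) := by linear_combination hc1 + qa1*hac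
    have e2' : qc2*(qa1^2+qa2^2) = qa2*(qa1^2+qa2^2) := by linear_combination hc2 + qa2*hac
    exact dC1A1 ⟨mul_right_cancel₀ hSa e1', mul_right_cancel₀ hSa e2'⟩
  have hcrB1 : qa1*qb2 - qa2*qb1 ≠ 0 := by
    intro hcr
    have hc1 : qb1*(qa1^2+qa2^2) = (qa1*qb1+qa2*qb2)*qa1 := by linear_combination (-qa2)*hcr
    have hc2 : qb2*(qa1^2+qa2^2) = (qa1*qb1+qa2*qb2)*qa2 := by linear_combination qa1*hcr
    have hr : (qa1*qb1+qa2*qb2)*r2 = (qa1^2+qa2^2)*r2 := by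
      linear_combination (qa1^2+qa2^2)*hdb - cp1*hc1 - cp2*hc2 - (qa1*qb1+qa2*qb2)*hda
    have hac : qa1*qb1+qa2*qb2 = qa1^2+qa2^2 := mul_right_cancel₀ hr2 hr
    have e1' : qb1*(qa1^2+qa2^2) = qa1*(qa1^2+qa2^2) := by linear_combination hc1 + qa1*hac
    have e2' : qb2*(qa1^2+qa2^2) = qa2*(qa1^2+qa2^2) := by linear_combination hc2 + qa2*hac
    exact dB1A1 ⟨mul_right_cancel₀ hSa e1', mul_right_cancel₀ hSa e2'⟩
  have hP1C1 : bp1*(qa1*qc2-qa2*qc1) = r2*(qc2-qa2) := by linear_combination qc2*hba - qa2*hbc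
  have hP2C1 : bp2*(qa1*qc2-qa2*qc1) = r2*(qa1-qc1) := by linear_combination qa1*hbc - qc1*hba
  have hNaC1 : (r2^2*((qa1-qc1)^2+(qa2-qc2)^2) - 2*r2*(qa1*qc2-qa2*qc1)*((qa1-qc1)*w2-(qa2-qc2)*w1) + m*(qa1*qc2-qa2*qc1)^2) = 0 := by
    linear_combination (qa1*qc2-qa2*qc1)^2*hpB - (bp1*(qa1*qc2-qa2*qc1) + r2*(qc2-qa2) - 2*w1*(qa1*qc2-qa2*qc1))*hP1C1
      - (bp2*(qa1*qc2-qa2*qc1) + r2*(qa1-qc1) - 2*w2*(qa1*qc2-qa2*qc1))*hP2C1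
  have hP1B1 : cp1*(qa1*qb2-qa2*qb1) = r2*(qb2-qa2) := by linear_combination qb2*hda - qa2*hdb
  have hP2B1 : cp2*(qa1*qb2-qa2*qb1) = r2*(qa1-qb1) := by linear_combination qa1*hdb - qb1*hda
  have hNaB1 : (r2^2*((qa1-qb1)^2+(qa2-qb2)^2) - 2*r2*(qa1*qb2-qa2*qb1)*((qa1-qb1)*w2-(qa2-qb2)*w1) + m*(qa1*qb2-qa2*qb1)^2) = 0 := by
    linear_combination (qa1*qb2-qa2*qb1)^2*hpC - (cp1*(qa1*qb2-qa2*qb1) + r2*(qb2-qa2) - 2*w1*(qa1*qb2-qa2*qb1))*hP1B1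
      - (cp2*(qa1*qb2-qa2*qb1) + r2*(qa1-qb1) - 2*w2*(qa1*qb2-qa2*qb1))*hP2B1
  obtain ⟨n1, hn1⟩ : ∃ x : ℝ, x = 2*(o1-e1) := ⟨_, rfl⟩
  obtain ⟨n2, hn2⟩ : ∃ x : ℝ, x = 2*(o2-e2) := ⟨_, rfl⟩
  have hbeA : (pa1-e1)^2+(pa2-e2)^2 ≠ 0 := by
    refine sumsq_ne ?_; rintro ⟨h1, h2⟩; exact dEA ⟨by linarith, by linarith⟩
  obtain ⟨sA, hsA⟩ : ∃ x : ℝ, x * ((pa1-e1)^2+(pa2-e2)^2) = -(pa1-e1)*n2 + (pa2-e2)*n1 :=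
    ⟨(-(pa1-e1)*n2 + (pa2-e2)*n1)/((pa1-e1)^2+(pa2-e2)^2), by field_simp⟩
  have hbetaA : (pa1-e1)*n1 + (pa2-e2)*n2 = (pa1-e1)^2+(pa2-e2)^2 := by
    linear_combination (-1)*hcA + hcE + (pa1-e1)*hn1 + (pa2-e2)*hn2
  obtain ⟨hbrA1, hbrA2⟩ := bridge e1 e2 n1 n2 pa1 pa2 sA ((pa1-e1)^2+(pa2-e2)^2) hbeA hbetaA hsA rfl
  have hbeB : (pb1-e1)^2+(pb2-e2)^2 ≠ 0 := by
    refine sumsq_ne ?_; rintro ⟨h1, h2⟩; exact dEB ⟨by linarith, by linarith⟩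
  obtain ⟨sB, hsB⟩ : ∃ x : ℝ, x * ((pb1-e1)^2+(pb2-e2)^2) = -(pb1-e1)*n2 + (pb2-e2)*n1 :=
    ⟨(-(pb1-e1)*n2 + (pb2-e2)*n1)/((pb1-e1)^2+(pb2-e2)^2), by field_simp⟩
  have hbetaB : (pb1-e1)*n1 + (pb2-e2)*n2 = (pb1-e1)^2+(pb2-e2)^2 := by
    linear_combination (-1)*hcB + hcE + (pb1-e1)*hn1 + (pb2-e2)*hn2
  obtain ⟨hbrB1, hbrB2⟩ := bridge e1 e2 n1 n2 pb1 pb2 sB ((pb1-e1)^2+(pb2-e2)^2) hbeB hbetaB hsB rfl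
  have hbeC : (pc1-e1)^2+(pc2-e2)^2 ≠ 0 := by
    refine sumsq_ne ?_; rintro ⟨h1, h2⟩; exact dEC ⟨by linarith, by linarith⟩
  obtain ⟨sC, hsC⟩ : ∃ x : ℝ, x * ((pc1-e1)^2+(pc2-e2)^2) = -(pc1-e1)*n2 + (pc2-e2)*n1 :=
    ⟨(-(pc1-e1)*n2 + (pc2-e2)*n1)/((pc1-e1)^2+(pc2-e2)^2), by field_simp⟩
  have hbetaC : (pc1-e1)*n1 + (pc2-e2)*n2 = (pc1-e1)^2+(pc2-e2)^2 := by
    linear_combination (-1)*hcC + hcE + (pc1-e1)*hn1 + (pc2-e2)*hn2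
  obtain ⟨hbrC1, hbrC2⟩ := bridge e1 e2 n1 n2 pc1 pc2 sC ((pc1-e1)^2+(pc2-e2)^2) hbeC hbetaC hsC rfl
  have hbeA1 : (qa1-e1)^2+(qa2-e2)^2 ≠ 0 := by
    refine sumsq_ne ?_; rintro ⟨h1, h2⟩; exact dEA1 ⟨by linarith, by linarith⟩
  obtain ⟨sa1, hsA1⟩ : ∃ x : ℝ, x * ((qa1-e1)^2+(qa2-e2)^2) = -(qa1-e1)*n2 + (qa2-e2)*n1 :=
    ⟨(-(qa1-e1)*n2 + (qa2-e2)*n1)/((qa1-e1)^2+(qa2-e2)^2), by field_simp⟩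
  have hbetaA1 : (qa1-e1)*n1 + (qa2-e2)*n2 = (qa1-e1)^2+(qa2-e2)^2 := by
    linear_combination (-1)*hcA1 + hcE + (qa1-e1)*hn1 + (qa2-e2)*hn2
  obtain ⟨hbrA11, hbrA12⟩ := bridge e1 e2 n1 n2 qa1 qa2 sa1 ((qa1-e1)^2+(qa2-e2)^2) hbeA1 hbetaA1 hsA1 rfl
  have hbeB1 : (qb1-e1)^2+(qb2-e2)^2 ≠ 0 := by
    refine sumsq_ne ?_; rintro ⟨h1, h2⟩; exact dEB1 ⟨by linarith, by linarith⟩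
  obtain ⟨sb1, hsB1⟩ : ∃ x : ℝ, x * ((qb1-e1)^2+(qb2-e2)^2) = -(qb1-e1)*n2 + (qb2-e2)*n1 :=
    ⟨(-(qb1-e1)*n2 + (qb2-e2)*n1)/((qb1-e1)^2+(qb2-e2)^2), by field_simp⟩
  have hbetaB1 : (qb1-e1)*n1 + (qb2-e2)*n2 = (qb1-e1)^2+(qb2-e2)^2 := by
    linear_combination (-1)*hcB1 + hcE + (qb1-e1)*hn1 + (qb2-e2)*hn2
  obtain ⟨hbrB11, hbrB12⟩ := bridge e1 e2 n1 n2 qb1 qb2 sb1 ((qb1-e1)^2+(qb2-e2)^2) hbeB1 hbetaB1 hsB1 rfl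
  have hbeC1 : (qc1-e1)^2+(qc2-e2)^2 ≠ 0 := by
    refine sumsq_ne ?_; rintro ⟨h1, h2⟩; exact dEC1 ⟨by linarith, by linarith⟩
  obtain ⟨sc1, hsC1⟩ : ∃ x : ℝ, x * ((qc1-e1)^2+(qc2-e2)^2) = -(qc1-e1)*n2 + (qc2-e2)*n1 :=
    ⟨(-(qc1-e1)*n2 + (qc2-e2)*n1)/((qc1-e1)^2+(qc2-e2)^2), by field_simp⟩
  have hbetaC1 : (qc1-e1)*n1 + (qc2-e2)*n2 = (qc1-e1)^2+(qc2-e2)^2 := by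
    linear_combination (-1)*hcC1 + hcE + (qc1-e1)*hn1 + (qc2-e2)*hn2
  obtain ⟨hbrC11, hbrC12⟩ := bridge e1 e2 n1 n2 qc1 qc2 sc1 ((qc1-e1)^2+(qc2-e2)^2) hbeC1 hbetaC1 hsC1 rfl
  have hsneAB : sA ≠ sB := by
    intro heq
    rw [heq] at hbrA1 hbrA2
    have h1 : pa1 = pb1 := mul_right_cancel₀ (by positivity) (hbrA1.trans hbrB1.symm)
    have h2 : pa2 = pb2 := mul_right_cancel₀ (by positivity) (hbrA2.trans hbrB2.symm)
    exact dAB ⟨h1, h2⟩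
  have hsneBC : sB ≠ sC := by
    intro heq
    rw [heq] at hbrB1 hbrB2
    have h1 : pb1 = pc1 := mul_right_cancel₀ (by positivity) (hbrB1.trans hbrC1.symm)
    have h2 : pb2 = pc2 := mul_right_cancel₀ (by positivity) (hbrB2.trans hbrC2.symm)
    exact dBC ⟨h1, h2⟩
  have hsneCA : sC ≠ sA := by
    intro heq
    rw [heq] at hbrC1 hbrC2
    have h1 : pc1 = pa1 := mul_right_cancel₀ (by positivity) (hbrC1.trans hbrA1.symm)
    have h2 : pc2 = pa2 := mul_right_cancel₀ (by positivity) (hbrC2.trans hbrA2.symm)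
    exact dCA ⟨h1, h2⟩
  have hsneC1B1 : sc1 ≠ sb1 := by
    intro heq
    rw [heq] at hbrC11 hbrC12
    have h1 : qc1 = qb1 := mul_right_cancel₀ (by positivity) (hbrC11.trans hbrB11.symm)
    have h2 : qc2 = qb2 := mul_right_cancel₀ (by positivity) (hbrC12.trans hbrB12.symm)
    exact dB1C1 ⟨by linarith [h1], by linarith [h2]⟩
  have hhhQab := NQ e1 e2 n1 n2 w1 w2 m r2 sA sB pa1 pa2 pb1 pb2 hbrA1 hbrA2 hbrB1 hbrB2
  have hzhQab : (sA-sB)^2 * ((1*n2^2*r2^2 + 1*n1^2*r2^2 + (-2)*e2*n2^2*w2*r2 + (-2)*e2*n1*n2*w1*r2 + 1*e2^2*n2^2*m + (-2)*e1*n1*n2*w2*r2 + (-2)*e1*n1^2*w1*r2 + 2*e1*e2*n1*n2*m + 1*e1^2*n1^2*m)*sA^2*sB^2 + ((-2)*e2*n2^2*w1*r2 + 4*e2*n1*n2*w2*r2 + 2*e2*n1^2*w1*r2 + (-2)*e2^2*n1*n2*m + (-2)*e1*n2^2*w2*r2 + (-4)*e1*n1*n2*w1*r2 + 2*e1*n1^2*w2*r2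 + 2*e1*e2*n2^2*m + (-2)*e1*e2*n1^2*m + 2*e1^2*n1*n2*m)*sA*sB*(sA+sB) + (1*n2^2*r2^2 + 1*n1^2*r2^2 + 2*e2*n1*n2*w1*r2 + (-2)*e2*n1^2*w2*r2 + 1*e2^2*n1^2*m + (-2)*e1*n2^2*w1*r2 + 2*e1*n1*n2*w2*r2 + (-2)*e1*e2*n1*n2*m + 1*e1^2*n2^2*m)*(sA^2+sB^2) + (2*n2^3*w2*r2 + 2*n1*n2^2*w1*r2 + 2*n1^2*n2*w2*r2 + 2*n1^3*w1*r2 + 4*e2*n2^2*w2*r2 + (-2)*e2*n2^3*m + 8*e2*n1*n2*w1*r2 + (-4)*e2*n1^2*w2*r2 + (-2)*e2*n1^2*n2*m + (-2)*e2^2*n2^2*m + 2*e2^2*n1^2*m + (-4)*e1*n2^2*w1*r2 + 8*e1*n1*n2*w2*r2 + (-2)*e1*n1*n2^2*m + 4*e1*n1^2*w1*r2 + (-2)*e1*n1^3*m + (-8)*e1*e2*n1*n2*m + 2*e1^2*n2^2*m + (-2)*e1^2*n1^2*m)*sA*sB + (2*n2^3*w1*r2 + (-2)*n1*n2^2*w2*r2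 + 2*n1^2*n2*w1*r2 + (-2)*n1^3*w2*r2 + 2*e2*n2^2*w1*r2 + (-4)*e2*n1*n2*w2*r2 + 2*e2*n1*n2^2*m + (-2)*e2*n1^2*w1*r2 + 2*e2*n1^3*m + 2*e2^2*n1*n2*m + 2*e1*n2^2*w2*r2 + (-2)*e1*n2^3*m + 4*e1*n1*n2*w1*r2 + (-2)*e1*n1^2*w2*r2 + (-2)*e1*n1^2*n2*m + (-2)*e1*e2*n2^2*m + 2*e1*e2*n1^2*m + (-2)*e1^2*n1*n2*m)*(sA+sB) + (1*n2^2*r2^2 + (-2)*n2^3*w2*r2 + 1*n2^4*m + (-2)*n1*n2^2*w1*r2 + 1*n1^2*r2^2 + (-2)*n1^2*n2*w2*r2 + 2*n1^2*n2^2*m + (-2)*n1^3*w1*r2 + 1*n1^4*m + (-2)*e2*n2^2*w2*r2 + 2*e2*n2^3*m + (-2)*e2*n1*n2*w1*r2 + 2*e2*n1^2*n2*m + 1*e2^2*n2^2*m + (-2)*e1*n1*n2*w2*r2 + 2*e1*n1*n2^2*m + (-2)*e1*n1^2*w1*r2 + 2*e1*n1^3*m + 2*e1*e2*n1*n2*m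 + 1*e1^2*n1^2*m)) = 0 := by
    linear_combination (-1)*hhhQab + (1+sA^2)^2*(1+sB^2)^2*hNab
  have hhhQbc := NQ e1 e2 n1 n2 w1 w2 m r2 sB sC pb1 pb2 pc1 pc2 hbrB1 hbrB2 hbrC1 hbrC2
  have hzhQbc : (sB-sC)^2 * ((1*n2^2*r2^2 + 1*n1^2*r2^2 + (-2)*e2*n2^2*w2*r2 + (-2)*e2*n1*n2*w1*r2 + 1*e2^2*n2^2*m + (-2)*e1*n1*n2*w2*r2 + (-2)*e1*n1^2*w1*r2 + 2*e1*e2*n1*n2*m + 1*e1^2*n1^2*m)*sB^2*sC^2 + ((-2)*e2*n2^2*w1*r2 + 4*e2*n1*n2*w2*r2 + 2*e2*n1^2*w1*r2 + (-2)*e2^2*n1*n2*m + (-2)*e1*n2^2*w2*r2 + (-4)*e1*n1*n2*w1*r2 + 2*e1*n1^2*w2*r2 + 2*e1*e2*n2^2*m + (-2)*e1*e2*n1^2*m + 2*e1^2*n1*n2*m)*sB*sC*(sB+sC) + (1*n2^2*r2^2 + 1*n1^2*r2^2 + 2*e2*n1*n2*w1*r2 + (-2)*e2*n1^2*w2*r2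 + 1*e2^2*n1^2*m + (-2)*e1*n2^2*w1*r2 + 2*e1*n1*n2*w2*r2 + (-2)*e1*e2*n1*n2*m + 1*e1^2*n2^2*m)*(sB^2+sC^2) + (2*n2^3*w2*r2 + 2*n1*n2^2*w1*r2 + 2*n1^2*n2*w2*r2 + 2*n1^3*w1*r2 + 4*e2*n2^2*w2*r2 + (-2)*e2*n2^3*m + 8*e2*n1*n2*w1*r2 + (-4)*e2*n1^2*w2*r2 + (-2)*e2*n1^2*n2*m + (-2)*e2^2*n2^2*m + 2*e2^2*n1^2*m + (-4)*e1*n2^2*w1*r2 + 8*e1*n1*n2*w2*r2 + (-2)*e1*n1*n2^2*m + 4*e1*n1^2*w1*r2 + (-2)*e1*n1^3*m + (-8)*e1*e2*n1*n2*m + 2*e1^2*n2^2*m + (-2)*e1^2*n1^2*m)*sB*sC + (2*n2^3*w1*r2 + (-2)*n1*n2^2*w2*r2 + 2*n1^2*n2*w1*r2 + (-2)*n1^3*w2*r2 + 2*e2*n2^2*w1*r2 + (-4)*e2*n1*n2*w2*r2 + 2*e2*n1*n2^2*m + (-2)*e2*n1^2*w1*r2 + 2*e2*n1^3*m + 2*e2^2*n1*n2*m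 + 2*e1*n2^2*w2*r2 + (-2)*e1*n2^3*m + 4*e1*n1*n2*w1*r2 + (-2)*e1*n1^2*w2*r2 + (-2)*e1*n1^2*n2*m + (-2)*e1*e2*n2^2*m + 2*e1*e2*n1^2*m + (-2)*e1^2*n1*n2*m)*(sB+sC) + (1*n2^2*r2^2 + (-2)*n2^3*w2*r2 + 1*n2^4*m + (-2)*n1*n2^2*w1*r2 + 1*n1^2*r2^2 + (-2)*n1^2*n2*w2*r2 + 2*n1^2*n2^2*m + (-2)*n1^3*w1*r2 + 1*n1^4*m + (-2)*e2*n2^2*w2*r2 + 2*e2*n2^3*m + (-2)*e2*n1*n2*w1*r2 + 2*e2*n1^2*n2*m + 1*e2^2*n2^2*m + (-2)*e1*n1*n2*w2*r2 + 2*e1*n1*n2^2*m + (-2)*e1*n1^2*w1*r2 + 2*e1*n1^3*m + 2*e1*e2*n1*n2*m + 1*e1^2*n1^2*m)) = 0 := by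
    linear_combination (-1)*hhhQbc + (1+sB^2)^2*(1+sC^2)^2*hNbc
  have hhhQca := NQ e1 e2 n1 n2 w1 w2 m r2 sC sA pc1 pc2 pa1 pa2 hbrC1 hbrC2 hbrA1 hbrA2
  have hzhQca : (sC-sA)^2 * ((1*n2^2*r2^2 + 1*n1^2*r2^2 + (-2)*e2*n2^2*w2*r2 + (-2)*e2*n1*n2*w1*r2 + 1*e2^2*n2^2*m + (-2)*e1*n1*n2*w2*r2 + (-2)*e1*n1^2*w1*r2 + 2*e1*e2*n1*n2*m + 1*e1^2*n1^2*m)*sC^2*sA^2 + ((-2)*e2*n2^2*w1*r2 + 4*e2*n1*n2*w2*r2 + 2*e2*n1^2*w1*r2 + (-2)*e2^2*n1*n2*m + (-2)*e1*n2^2*w2*r2 + (-4)*e1*n1*n2*w1*r2 + 2*e1*n1^2*w2*r2 + 2*e1*e2*n2^2*m + (-2)*e1*e2*n1^2*m + 2*e1^2*n1*n2*m)*sC*sA*(sC+sA) + (1*n2^2*r2^2 + 1*n1^2*r2^2 + 2*e2*n1*n2*w1*r2 + (-2)*e2*n1^2*w2*r2 + 1*e2^2*n1^2*m + (-2)*e1*n2^2*w1*r2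 + 2*e1*n1*n2*w2*r2 + (-2)*e1*e2*n1*n2*m + 1*e1^2*n2^2*m)*(sC^2+sA^2) + (2*n2^3*w2*r2 + 2*n1*n2^2*w1*r2 + 2*n1^2*n2*w2*r2 + 2*n1^3*w1*r2 + 4*e2*n2^2*w2*r2 + (-2)*e2*n2^3*m + 8*e2*n1*n2*w1*r2 + (-4)*e2*n1^2*w2*r2 + (-2)*e2*n1^2*n2*m + (-2)*e2^2*n2^2*m + 2*e2^2*n1^2*m + (-4)*e1*n2^2*w1*r2 + 8*e1*n1*n2*w2*r2 + (-2)*e1*n1*n2^2*m + 4*e1*n1^2*w1*r2 + (-2)*e1*n1^3*m + (-8)*e1*e2*n1*n2*m + 2*e1^2*n2^2*m + (-2)*e1^2*n1^2*m)*sC*sA + (2*n2^3*w1*r2 + (-2)*n1*n2^2*w2*r2 + 2*n1^2*n2*w1*r2 + (-2)*n1^3*w2*r2 + 2*e2*n2^2*w1*r2 + (-4)*e2*n1*n2*w2*r2 + 2*e2*n1*n2^2*m + (-2)*e2*n1^2*w1*r2 + 2*e2*n1^3*m + 2*e2^2*n1*n2*m + 2*e1*n2^2*w2*r2 + (-2)*e1*n2^3*m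 + 4*e1*n1*n2*w1*r2 + (-2)*e1*n1^2*w2*r2 + (-2)*e1*n1^2*n2*m + (-2)*e1*e2*n2^2*m + 2*e1*e2*n1^2*m + (-2)*e1^2*n1*n2*m)*(sC+sA) + (1*n2^2*r2^2 + (-2)*n2^3*w2*r2 + 1*n2^4*m + (-2)*n1*n2^2*w1*r2 + 1*n1^2*r2^2 + (-2)*n1^2*n2*w2*r2 + 2*n1^2*n2^2*m + (-2)*n1^3*w1*r2 + 1*n1^4*m + (-2)*e2*n2^2*w2*r2 + 2*e2*n2^3*m + (-2)*e2*n1*n2*w1*r2 + 2*e2*n1^2*n2*m + 1*e2^2*n2^2*m + (-2)*e1*n1*n2*w2*r2 + 2*e1*n1*n2^2*m + (-2)*e1*n1^2*w1*r2 + 2*e1*n1^3*m + 2*e1*e2*n1*n2*m + 1*e1^2*n1^2*m)) = 0 := by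
    linear_combination (-1)*hhhQca + (1+sC^2)^2*(1+sA^2)^2*hNca
  have hhhQuv := NQ e1 e2 n1 n2 w1 w2 m r2 sa1 sc1 qa1 qa2 qc1 qc2 hbrA11 hbrA12 hbrC11 hbrC12
  have hzhQuv : (sa1-sc1)^2 * ((1*n2^2*r2^2 + 1*n1^2*r2^2 + (-2)*e2*n2^2*w2*r2 + (-2)*e2*n1*n2*w1*r2 + 1*e2^2*n2^2*m + (-2)*e1*n1*n2*w2*r2 + (-2)*e1*n1^2*w1*r2 + 2*e1*e2*n1*n2*m + 1*e1^2*n1^2*m)*sa1^2*sc1^2 + ((-2)*e2*n2^2*w1*r2 + 4*e2*n1*n2*w2*r2 + 2*e2*n1^2*w1*r2 + (-2)*e2^2*n1*n2*m + (-2)*e1*n2^2*w2*r2 + (-4)*e1*n1*n2*w1*r2 + 2*e1*n1^2*w2*r2 + 2*e1*e2*n2^2*m + (-2)*e1*e2*n1^2*m + 2*e1^2*n1*n2*m)*sa1*sc1*(sa1+sc1) + (1*n2^2*r2^2 + 1*n1^2*r2^2 + 2*e2*n1*n2*w1*r2 + (-2)*e2*n1^2*w2*r2 + 1*e2^2*n1^2*m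 + (-2)*e1*n2^2*w1*r2 + 2*e1*n1*n2*w2*r2 + (-2)*e1*e2*n1*n2*m + 1*e1^2*n2^2*m)*(sa1^2+sc1^2) + (2*n2^3*w2*r2 + 2*n1*n2^2*w1*r2 + 2*n1^2*n2*w2*r2 + 2*n1^3*w1*r2 + 4*e2*n2^2*w2*r2 + (-2)*e2*n2^3*m + 8*e2*n1*n2*w1*r2 + (-4)*e2*n1^2*w2*r2 + (-2)*e2*n1^2*n2*m + (-2)*e2^2*n2^2*m + 2*e2^2*n1^2*m + (-4)*e1*n2^2*w1*r2 + 8*e1*n1*n2*w2*r2 + (-2)*e1*n1*n2^2*m + 4*e1*n1^2*w1*r2 + (-2)*e1*n1^3*m + (-8)*e1*e2*n1*n2*m + 2*e1^2*n2^2*m + (-2)*e1^2*n1^2*m)*sa1*sc1 + (2*n2^3*w1*r2 + (-2)*n1*n2^2*w2*r2 + 2*n1^2*n2*w1*r2 + (-2)*n1^3*w2*r2 + 2*e2*n2^2*w1*r2 + (-4)*e2*n1*n2*w2*r2 + 2*e2*n1*n2^2*m + (-2)*e2*n1^2*w1*r2 + 2*e2*n1^3*m + 2*e2^2*n1*n2*m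 + 2*e1*n2^2*w2*r2 + (-2)*e1*n2^3*m + 4*e1*n1*n2*w1*r2 + (-2)*e1*n1^2*w2*r2 + (-2)*e1*n1^2*n2*m + (-2)*e1*e2*n2^2*m + 2*e1*e2*n1^2*m + (-2)*e1^2*n1*n2*m)*(sa1+sc1) + (1*n2^2*r2^2 + (-2)*n2^3*w2*r2 + 1*n2^4*m + (-2)*n1*n2^2*w1*r2 + 1*n1^2*r2^2 + (-2)*n1^2*n2*w2*r2 + 2*n1^2*n2^2*m + (-2)*n1^3*w1*r2 + 1*n1^4*m + (-2)*e2*n2^2*w2*r2 + 2*e2*n2^3*m + (-2)*e2*n1*n2*w1*r2 + 2*e2*n1^2*n2*m + 1*e2^2*n2^2*m + (-2)*e1*n1*n2*w2*r2 + 2*e1*n1*n2^2*m + (-2)*e1*n1^2*w1*r2 + 2*e1*n1^3*m + 2*e1*e2*n1*n2*m + 1*e1^2*n1^2*m)) = 0 := by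
    linear_combination (-1)*hhhQuv + (1+sa1^2)^2*(1+sc1^2)^2*hNaC1
  have hhhQuw := NQ e1 e2 n1 n2 w1 w2 m r2 sa1 sb1 qa1 qa2 qb1 qb2 hbrA11 hbrA12 hbrB11 hbrB12
  have hzhQuw : (sa1-sb1)^2 * ((1*n2^2*r2^2 + 1*n1^2*r2^2 + (-2)*e2*n2^2*w2*r2 + (-2)*e2*n1*n2*w1*r2 + 1*e2^2*n2^2*m + (-2)*e1*n1*n2*w2*r2 + (-2)*e1*n1^2*w1*r2 + 2*e1*e2*n1*n2*m + 1*e1^2*n1^2*m)*sa1^2*sb1^2 + ((-2)*e2*n2^2*w1*r2 + 4*e2*n1*n2*w2*r2 + 2*e2*n1^2*w1*r2 + (-2)*e2^2*n1*n2*m + (-2)*e1*n2^2*w2*r2 + (-4)*e1*n1*n2*w1*r2 + 2*e1*n1^2*w2*r2 + 2*e1*e2*n2^2*m + (-2)*e1*e2*n1^2*m + 2*e1^2*n1*n2*m)*sa1*sb1*(sa1+sb1) + (1*n2^2*r2^2 + 1*n1^2*r2^2 + 2*e2*n1*n2*w1*r2 + (-2)*e2*n1^2*w2*r2 + 1*e2^2*n1^2*m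 + (-2)*e1*n2^2*w1*r2 + 2*e1*n1*n2*w2*r2 + (-2)*e1*e2*n1*n2*m + 1*e1^2*n2^2*m)*(sa1^2+sb1^2) + (2*n2^3*w2*r2 + 2*n1*n2^2*w1*r2 + 2*n1^2*n2*w2*r2 + 2*n1^3*w1*r2 + 4*e2*n2^2*w2*r2 + (-2)*e2*n2^3*m + 8*e2*n1*n2*w1*r2 + (-4)*e2*n1^2*w2*r2 + (-2)*e2*n1^2*n2*m + (-2)*e2^2*n2^2*m + 2*e2^2*n1^2*m + (-4)*e1*n2^2*w1*r2 + 8*e1*n1*n2*w2*r2 + (-2)*e1*n1*n2^2*m + 4*e1*n1^2*w1*r2 + (-2)*e1*n1^3*m + (-8)*e1*e2*n1*n2*m + 2*e1^2*n2^2*m + (-2)*e1^2*n1^2*m)*sa1*sb1 + (2*n2^3*w1*r2 + (-2)*n1*n2^2*w2*r2 + 2*n1^2*n2*w1*r2 + (-2)*n1^3*w2*r2 + 2*e2*n2^2*w1*r2 + (-4)*e2*n1*n2*w2*r2 + 2*e2*n1*n2^2*m + (-2)*e2*n1^2*w1*r2 + 2*e2*n1^3*m + 2*e2^2*n1*n2*m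 + 2*e1*n2^2*w2*r2 + (-2)*e1*n2^3*m + 4*e1*n1*n2*w1*r2 + (-2)*e1*n1^2*w2*r2 + (-2)*e1*n1^2*n2*m + (-2)*e1*e2*n2^2*m + 2*e1*e2*n1^2*m + (-2)*e1^2*n1*n2*m)*(sa1+sb1) + (1*n2^2*r2^2 + (-2)*n2^3*w2*r2 + 1*n2^4*m + (-2)*n1*n2^2*w1*r2 + 1*n1^2*r2^2 + (-2)*n1^2*n2*w2*r2 + 2*n1^2*n2^2*m + (-2)*n1^3*w1*r2 + 1*n1^4*m + (-2)*e2*n2^2*w2*r2 + 2*e2*n2^3*m + (-2)*e2*n1*n2*w1*r2 + 2*e2*n1^2*n2*m + 1*e2^2*n2^2*m + (-2)*e1*n1*n2*w2*r2 + 2*e1*n1*n2^2*m + (-2)*e1*n1^2*w1*r2 + 2*e1*n1^3*m + 2*e1*e2*n1*n2*m + 1*e1^2*n1^2*m)) = 0 := by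
    linear_combination (-1)*hhhQuw + (1+sa1^2)^2*(1+sb1^2)^2*hNaB1
  have hQab := (mul_eq_zero.mp hzhQab).resolve_left (pow_ne_zero 2 (sub_ne_zero.mpr hsneAB))
  have hQbc := (mul_eq_zero.mp hzhQbc).resolve_left (pow_ne_zero 2 (sub_ne_zero.mpr hsneBC))
  have hQca := (mul_eq_zero.mp hzhQca).resolve_left (pow_ne_zero 2 (sub_ne_zero.mpr hsneCA))
  have hsneA1C1 : sa1 ≠ sc1 := by
    intro heq
    rw [heq] at hbrA11 hbrA12
    have h1 : qa1 = qc1 := mul_right_cancel₀ (by positivity) (hbrA11.trans hbrC11.symm)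
    have h2 : qa2 = qc2 := mul_right_cancel₀ (by positivity) (hbrA12.trans hbrC12.symm)
    exact dC1A1 ⟨h1.symm, h2.symm⟩
  have hsneA1B1 : sa1 ≠ sb1 := by
    intro heq
    rw [heq] at hbrA11 hbrA12
    have h1 : qa1 = qb1 := mul_right_cancel₀ (by positivity) (hbrA11.trans hbrB11.symm)
    have h2 : qa2 = qb2 := mul_right_cancel₀ (by positivity) (hbrA12.trans hbrB12.symm)
    exact dB1A1 ⟨h1.symm, h2.symm⟩
  have hQuv := (mul_eq_zero.mp hzhQuv).resolve_left (pow_ne_zero 2 (sub_ne_zero.mpr hsneA1C1))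
  have hQuw := (mul_eq_zero.mp hzhQuw).resolve_left (pow_ne_zero 2 (sub_ne_zero.mpr hsneA1B1))
  have hAne : (1*n2^2*r2^2 + 1*n1^2*r2^2 + (-2)*e2*n2^2*w2*r2 + (-2)*e2*n1*n2*w1*r2 + 1*e2^2*n2^2*m + (-2)*e1*n1*n2*w2*r2 + (-2)*e1*n1^2*w1*r2 + 2*e1*e2*n1*n2*m + 1*e1^2*n1^2*m)*sa1^2 + ((-2)*e2*n2^2*w1*r2 + 4*e2*n1*n2*w2*r2 + 2*e2*n1^2*w1*r2 + (-2)*e2^2*n1*n2*m + (-2)*e1*n2^2*w2*r2 + (-4)*e1*n1*n2*w1*r2 + 2*e1*n1^2*w2*r2 + 2*e1*e2*n2^2*m + (-2)*e1*e2*n1^2*m + 2*e1^2*n1*n2*m)*sa1 + (1*n2^2*r2^2 + 1*n1^2*r2^2 + 2*e2*n1*n2*w1*r2 + (-2)*e2*n1^2*w2*r2 + 1*e2^2*n1^2*m + (-2)*e1*n2^2*w1*r2 + 2*e1*n1*n2*w2*r2 + (-2)*e1*e2*n1*n2*m + 1*e1^2*n2^2*m) ≠ 0 := by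
    intro hA0
    have hNAe := NA e1 e2 n1 n2 w1 w2 m r2 sa1 qa1 qa2 hbrA11 hbrA12
    have hzA : (1+sa1^2)^2*(r2^2*((qa1-e1)^2+(qa2-e2)^2) - 2*r2*(qa1*e2-qa2*e1)*((qa1-e1)*w2-(qa2-e2)*w1) + m*(qa1*e2-qa2*e1)^2) = 0 := hNAe.trans hA0
    have hNae : (r2^2*((qa1-e1)^2+(qa2-e2)^2) - 2*r2*(qa1*e2-qa2*e1)*((qa1-e1)*w2-(qa2-e2)*w1) + m*(qa1*e2-qa2*e1)^2) = 0 :=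
      (mul_eq_zero.mp hzA).resolve_left (by positivity)
    by_cases hcr : qa1*e2 - qa2*e1 = 0
    · have h : r2^2*((qa1-e1)^2+(qa2-e2)^2) = 0 := by
        linear_combination hNae + (2*r2*((qa1-e1)*w2-(qa2-e2)*w1) - m*(qa1*e2-qa2*e1))*hcr
      have h2 : (qa1-e1)^2+(qa2-e2)^2 = 0 :=
        (mul_eq_zero.mp h).resolve_left (pow_ne_zero 2 hr2)
      obtain ⟨h1', h2'⟩ := sumsq_eq h2
      exact dEA1 ⟨by linarith, by linarith⟩
    · obtain ⟨p1, hp1⟩ : ∃ x : ℝ, x*(qa1*e2-qa2*e1) = r2*(e2-qa2) :=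
        ⟨r2*(e2-qa2)/(qa1*e2-qa2*e1), by rw [div_mul_cancel₀ _ hcr]⟩
      obtain ⟨p2, hp2⟩ : ∃ x : ℝ, x*(qa1*e2-qa2*e1) = r2*(qa1-e1) :=
        ⟨r2*(qa1-e1)/(qa1*e2-qa2*e1), by rw [div_mul_cancel₀ _ hcr]⟩
      have hpa : qa1*p1+qa2*p2 = r2 := by
        refine mul_right_cancel₀ hcr ?_; linear_combination qa1*hp1 + qa2*hp2
      have hpe : e1*p1+e2*p2 = r2 := by
        refine mul_right_cancel₀ hcr ?_; linear_combination e1*hp1 + e2*hp2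
      have hqpp : p1^2+p2^2-2*(p1*w1+p2*w2)+m = 0 := by
        refine mul_right_cancel₀ (pow_ne_zero 2 hcr) ?_
        linear_combination hNae + (p1*(qa1*e2-qa2*e1) + r2*(e2-qa2) - 2*w1*(qa1*e2-qa2*e1))*hp1
          + (p2*(qa1*e2-qa2*e1) + r2*(qa1-e1) - 2*w2*(qa1*e2-qa2*e1))*hp2
      have h3 := three_pts qa1 qa2 w1 w2 m r2 p1 p2 bp1 bp2 cp1 cp2 hSa
        (by linear_combination hpa) (by linear_combination hba) (by linear_combination hda)
        hqpp hpB hpC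
      rcases h3 with ⟨hb1, hb2⟩ | ⟨hb1, hb2⟩ | ⟨hb1, hb2⟩
      · have hvbp : bp1^2+bp2^2 ≠ 0 := sumsq_ne hbp0
        have h4 := three_pts bp1 bp2 o1 o2 (o1^2+o2^2-rr) r2 e1 e2 qa1 qa2 qc1 qc2 hvbp
          (by linear_combination (-e1)*hb1 + (-e2)*hb2 + hpe)
          (by linear_combination hba) (by linear_combination hbc)
          (by linear_combination hcE) (by linear_combination hcA1) (by linear_combination hcC1)
        rcases h4 with ⟨u1, u2⟩ | ⟨u1, u2⟩ | ⟨u1, u2⟩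
        · exact dEA1 ⟨u1, u2⟩
        · exact dEC1 ⟨u1, u2⟩
        · exact dC1A1 ⟨u1.symm, u2.symm⟩
      · have hvcp : cp1^2+cp2^2 ≠ 0 := sumsq_ne hcp0
        have h4 := three_pts cp1 cp2 o1 o2 (o1^2+o2^2-rr) r2 e1 e2 qa1 qa2 qb1 qb2 hvcp
          (by linear_combination (-e1)*hb1 + (-e2)*hb2 + hpe)
          (by linear_combination hda) (by linear_combination hdb)
          (by linear_combination hcE) (by linear_combination hcA1) (by linear_combination hcB1)
        rcases h4 with ⟨u1, u2⟩ | ⟨u1, u2⟩ | ⟨u1, u2⟩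
        · exact dEA1 ⟨u1, u2⟩
        · exact dEB1 ⟨u1, u2⟩
        · exact dB1A1 ⟨u1.symm, u2.symm⟩
      · exact dbpcp ⟨hb1, hb2⟩
  have hQvw := biquad_porism (1*n2^2*r2^2 + 1*n1^2*r2^2 + (-2)*e2*n2^2*w2*r2 + (-2)*e2*n1*n2*w1*r2 + 1*e2^2*n2^2*m + (-2)*e1*n1*n2*w2*r2 + (-2)*e1*n1^2*w1*r2 + 2*e1*e2*n1*n2*m + 1*e1^2*n1^2*m) ((-2)*e2*n2^2*w1*r2 + 4*e2*n1*n2*w2*r2 + 2*e2*n1^2*w1*r2 + (-2)*e2^2*n1*n2*m + (-2)*e1*n2^2*w2*r2 + (-4)*e1*n1*n2*w1*r2 + 2*e1*n1^2*w2*r2 + 2*e1*e2*n2^2*m + (-2)*e1*e2*n1^2*m + 2*e1^2*n1*n2*m) (1*n2^2*r2^2 + 1*n1^2*r2^2 + 2*e2*n1*n2*w1*r2 + (-2)*e2*n1^2*w2*r2 + 1*e2^2*n1^2*m + (-2)*e1*n2^2*w1*r2 + 2*e1*n1*n2*w2*r2 + (-2)*e1*e2*n1*n2*m + 1*e1^2*n2^2*m)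 (2*n2^3*w2*r2 + 2*n1*n2^2*w1*r2 + 2*n1^2*n2*w2*r2 + 2*n1^3*w1*r2 + 4*e2*n2^2*w2*r2 + (-2)*e2*n2^3*m + 8*e2*n1*n2*w1*r2 + (-4)*e2*n1^2*w2*r2 + (-2)*e2*n1^2*n2*m + (-2)*e2^2*n2^2*m + 2*e2^2*n1^2*m + (-4)*e1*n2^2*w1*r2 + 8*e1*n1*n2*w2*r2 + (-2)*e1*n1*n2^2*m + 4*e1*n1^2*w1*r2 + (-2)*e1*n1^3*m + (-8)*e1*e2*n1*n2*m + 2*e1^2*n2^2*m + (-2)*e1^2*n1^2*m) (2*n2^3*w1*r2 + (-2)*n1*n2^2*w2*r2 + 2*n1^2*n2*w1*r2 + (-2)*n1^3*w2*r2 + 2*e2*n2^2*w1*r2 + (-4)*e2*n1*n2*w2*r2 + 2*e2*n1*n2^2*m + (-2)*e2*n1^2*w1*r2 + 2*e2*n1^3*m + 2*e2^2*n1*n2*m + 2*e1*n2^2*w2*r2 + (-2)*e1*n2^3*m + 4*e1*n1*n2*w1*r2 + (-2)*e1*n1^2*w2*r2 + (-2)*e1*n1^2*n2*m + (-2)*e1*e2*n2^2*m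 + 2*e1*e2*n1^2*m + (-2)*e1^2*n1*n2*m) (1*n2^2*r2^2 + (-2)*n2^3*w2*r2 + 1*n2^4*m + (-2)*n1*n2^2*w1*r2 + 1*n1^2*r2^2 + (-2)*n1^2*n2*w2*r2 + 2*n1^2*n2^2*m + (-2)*n1^3*w1*r2 + 1*n1^4*m + (-2)*e2*n2^2*w2*r2 + 2*e2*n2^3*m + (-2)*e2*n1*n2*w1*r2 + 2*e2*n1^2*n2*m + 1*e2^2*n2^2*m + (-2)*e1*n1*n2*w2*r2 + 2*e1*n1*n2^2*m + (-2)*e1*n1^2*w1*r2 + 2*e1*n1^3*m + 2*e1*e2*n1*n2*m + 1*e1^2*n1^2*m)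
    sA sB sC sa1 sc1 sb1 hsneAB hsneBC hsneCA hQab hQbc hQca hQuv hQuw hsneC1B1 hAne
  have hhfin := NQ e1 e2 n1 n2 w1 w2 m r2 sc1 sb1 qc1 qc2 qb1 qb2 hbrC11 hbrC12 hbrB11 hbrB12
  have hzf : (1+sc1^2)^2*(1+sb1^2)^2*(r2^2*((qc1-qb1)^2+(qc2-qb2)^2) - 2*r2*(qc1*qb2-qc2*qb1)*((qc1-qb1)*w2-(qc2-qb2)*w1) + m*(qc1*qb2-qc2*qb1)^2) = 0 := by
    linear_combination hhfin + (sc1-sb1)^2*hQvw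
  have hNf : (r2^2*((qc1-qb1)^2+(qc2-qb2)^2) - 2*r2*(qc1*qb2-qc2*qb1)*((qc1-qb1)*w2-(qc2-qb2)*w1) + m*(qc1*qb2-qc2*qb1)^2) = 0 :=
    (mul_eq_zero.mp hzf).resolve_left (by positivity)
  linear_combination hNf
/-- coordinates of a sphere membership -/
lemma sph_coords {S : EuclideanGeometry.Sphere Pt} {X : Pt} (h : X ∈ S) :
    (X 0 - S.center 0)^2 + (X 1 - S.center 1)^2 = S.radius^2 := by
  have hd : dist X S.center = S.radius := h
  have hn : ‖X - S.center‖ = S.radius := by rwa [dist_eq_norm] at hd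
  have h2 : ‖X - S.center‖^2 = S.radius^2 := by rw [hn]
  rw [normsq2] at h2
  exact h2

/-- membership from squared coordinates, given a nonneg radius -/
lemma sph_mem {S : EuclideanGeometry.Sphere Pt} {X : Pt} (hr : 0 ≤ S.radius)
    (h : (X 0 - S.center 0)^2 + (X 1 - S.center 1)^2 = S.radius^2) : X ∈ S := by
  have hn : ‖X - S.center‖^2 = S.radius^2 := by rw [normsq2]; exact h
  have h2 : (‖X - S.center‖ - S.radius) * (‖X - S.center‖ + S.radius) = 0 := by
    linear_combination hn
  have hd : dist X S.center = S.radius := by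
    rw [dist_eq_norm]
    rcases mul_eq_zero.mp h2 with h' | h'
    · linarith
    · have := norm_nonneg (X - S.center); linarith
  exact hd

/-- polar membership in coordinates -/
lemma polar_line {D P X : Pt} {r : ℝ} (hPD : P ≠ D) (h : X ∈ polar D r P) :
    (X 0 - D 0)*(P 0 - D 0) + (X 1 - D 1)*(P 1 - D 1) = r^2 := by
  have hS : (P 0 - D 0)^2 + (P 1 - D 1)^2 ≠ 0 := by
    refine sumsq_ne ?_
    rintro ⟨h1, h2⟩
    exact hPD (pt_ext (by linarith) (by linarith))
  have h' : (inner ℝ (X - invPt D r P) (P - D) : ℝ) = 0 := h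
  rw [inner2] at h'
  have h'' : (X 0 - (D 0 + r^2/‖P-D‖^2*(P 0 - D 0)))*(P 0 - D 0)
      + (X 1 - (D 1 + r^2/‖P-D‖^2*(P 1 - D 1)))*(P 1 - D 1) = 0 := h'
  have hnp : ‖P-D‖^2 = (P 0 - D 0)^2 + (P 1 - D 1)^2 := by rw [normsq2]; rfl
  rw [hnp] at h''
  have hc : r^2/((P 0 - D 0)^2 + (P 1 - D 1)^2)*((P 0 - D 0)^2 + (P 1 - D 1)^2) = r^2 :=
    div_mul_cancel₀ _ hS
  linear_combination h'' + hc

/-- the two pole equations for the inverse of a foot -/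
lemma pole_from_foot {D X Y F : Pt} {r : ℝ} (hDL : D ∉ L X Y) (hF : IsFoot D X Y F) :
    ((invPt D r F) 0 - D 0)*(X 0 - D 0) + ((invPt D r F) 1 - D 1)*(X 1 - D 1) = r^2 ∧
    ((invPt D r F) 0 - D 0)*(Y 0 - D 0) + ((invPt D r F) 1 - D 1)*(Y 1 - D 1) = r^2 := by
  obtain ⟨hFmem, hFperp⟩ := hF
  have hFD : F ≠ D := fun h => hDL (h ▸ hFmem)
  have hS : (F 0 - D 0)^2 + (F 1 - D 1)^2 ≠ 0 := by
    refine sumsq_ne ?_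
    rintro ⟨h1, h2⟩
    exact hFD (pt_ext (by linarith) (by linarith))
  obtain ⟨θ, hθ⟩ : ∃ θ : ℝ, F = X + θ • (Y - X) := by
    have h' : (F - X) +ᵥ X ∈ line[ℝ, X, Y] := by simpa [L] using hFmem
    obtain ⟨θ, hθ⟩ := (vadd_left_mem_affineSpan_pair).mp h'
    exact ⟨θ, by show F = X + θ • (Y -ᵥ X); rw [hθ]; abel⟩
  have hl1 : F 0 = X 0 + θ*(Y 0 - X 0) := by rw [hθ]; rfl
  have hl2 : F 1 = X 1 + θ*(Y 1 - X 1) := by rw [hθ]; rfl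
  have hperp : (D 0 - F 0)*(X 0 - Y 0) + (D 1 - F 1)*(X 1 - Y 1) = 0 := by
    have := hFperp; rw [inner2] at this; exact this
  have hnp : ‖F-D‖^2 = (F 0 - D 0)^2 + (F 1 - D 1)^2 := by rw [normsq2]; rfl
  have hq1 : ((invPt D r F) 0 - D 0)*((F 0 - D 0)^2 + (F 1 - D 1)^2) = r^2*(F 0 - D 0) := by
    have h0 : (invPt D r F) 0 - D 0 = r^2/((F 0 - D 0)^2 + (F 1 - D 1)^2)*(F 0 - D 0) := by
      show D 0 + r^2/‖F-D‖^2*(F 0 - D 0) - D 0 = _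
      rw [hnp]; ring
    rw [h0]; field_simp
  have hq2 : ((invPt D r F) 1 - D 1)*((F 0 - D 0)^2 + (F 1 - D 1)^2) = r^2*(F 1 - D 1) := by
    have h0 : (invPt D r F) 1 - D 1 = r^2/((F 0 - D 0)^2 + (F 1 - D 1)^2)*(F 1 - D 1) := by
      show D 1 + r^2/‖F-D‖^2*(F 1 - D 1) - D 1 = _
      rw [hnp]; ring
    rw [h0]; field_simp
  constructor
  · refine mul_right_cancel₀ hS ?_
    linear_combination (X 0 - D 0)*hq1 + (X 1 - D 1)*hq2 - r^2*θ*hperp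
      - r^2*(F 0 - D 0)*hl1 - r^2*(F 1 - D 1)*hl2
  · refine mul_right_cancel₀ hS ?_
    linear_combination (Y 0 - D 0)*hq1 + (Y 1 - D 1)*hq2 - r^2*(θ-1)*hperp
      - r^2*(F 0 - D 0)*hl1 - r^2*(F 1 - D 1)*hl2

/-- if the cross product (relative to D) vanishes then D is on the line -/
lemma mem_line_of_cross {X Y D : Pt} (hXY : X ≠ Y) (hXD : X ≠ D)
    (h : (X 0 - D 0)*(Y 1 - D 1) - (X 1 - D 1)*(Y 0 - D 0) = 0) : D ∈ L X Y := by
  have hS : (X 0 - D 0)^2 + (X 1 - D 1)^2 ≠ 0 := by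
    refine sumsq_ne ?_
    rintro ⟨h1, h2⟩
    exact hXD (pt_ext (by linarith) (by linarith))
  obtain ⟨μ, hμ⟩ : ∃ μ : ℝ, (Y 0 - D 0) = μ*(X 0 - D 0) ∧ (Y 1 - D 1) = μ*(X 1 - D 1) := by
    refine ⟨((X 0 - D 0)*(Y 0 - D 0) + (X 1 - D 1)*(Y 1 - D 1))/((X 0 - D 0)^2 + (X 1 - D 1)^2), ?_, ?_⟩
    · rw [div_mul_eq_mul_div, eq_div_iff hS]; linear_combination (-(X 1 - D 1))*h
    · rw [div_mul_eq_mul_div, eq_div_iff hS]; linear_combination (X 0 - D 0)*h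
  have hμ1 : μ ≠ 1 := by
    intro h1
    rw [h1] at hμ
    exact hXY (pt_ext (by linarith [hμ.1]) (by linarith [hμ.2])).symm
  have hD : D = X + (1/(1-μ)) • (Y - X) := by
    have hμ0 : (1:ℝ) - μ ≠ 0 := sub_ne_zero.mpr (Ne.symm hμ1)
    have h0 : D 0 * (1-μ) = X 0 * (1-μ) + (Y 0 - X 0) := by linear_combination -hμ.1
    have h1 : D 1 * (1-μ) = X 1 * (1-μ) + (Y 1 - X 1) := by linear_combination -hμ.2
    refine pt_ext ?_ ?_
    · show D 0 = X 0 + (1/(1-μ))*(Y 0 - X 0)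
      field_simp
      linear_combination h0
    · show D 1 = X 1 + (1/(1-μ))*(Y 1 - X 1)
      field_simp
      linear_combination h1
  have hmem : X + (1/(1-μ)) • (Y - X) ∈ affineSpan ℝ ({X, Y} : Set Pt) := by
    have := AffineMap.lineMap_mem_affineSpan_pair (1/(1-μ)) X Y
    convert this using 1
    simp [AffineMap.lineMap_apply]
    abel
  rw [L]
  rw [hD]
  exact hmem

/-- from two pole equations plus circle membership, the N-equation -/
lemma N_of_pole (w1 w2 m r2 x1 x2 y1 y2 p1 p2 : ℝ)
    (hpx : p1*x1+p2*x2 = r2) (hpy : p1*y1+p2*y2 = r2)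
    (hqp : p1^2+p2^2-2*(p1*w1+p2*w2)+m = 0) :
    (r2^2*((x1-y1)^2+(x2-y2)^2) - 2*r2*(x1*y2-x2*y1)*((x1-y1)*w2-(x2-y2)*w1) + m*(x1*y2-x2*y1)^2) = 0 := by
  have hP1 : p1*(x1*y2-x2*y1) = r2*(y2-x2) := by linear_combination y2*hpx - x2*hpy
  have hP2 : p2*(x1*y2-x2*y1) = r2*(x1-y1) := by linear_combination x1*hpy - y1*hpx
  linear_combination (x1*y2-x2*y1)^2*hqp - (p1*(x1*y2-x2*y1) + r2*(y2-x2) - 2*w1*(x1*y2-x2*y1))*hP1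
    - (p2*(x1*y2-x2*y1) + r2*(x1-y1) - 2*w2*(x1*y2-x2*y1))*hP2

/-- conversely, from the N-equation and pole equations, circle membership -/
lemma qp_of_pole (w1 w2 m r2 x1 x2 y1 y2 p1 p2 : ℝ) (hδ : x1*y2 - x2*y1 ≠ 0)
    (hpx : p1*x1+p2*x2 = r2) (hpy : p1*y1+p2*y2 = r2)
    (hN : (r2^2*((x1-y1)^2+(x2-y2)^2) - 2*r2*(x1*y2-x2*y1)*((x1-y1)*w2-(x2-y2)*w1) + m*(x1*y2-x2*y1)^2) = 0) :
    p1^2+p2^2-2*(p1*w1+p2*w2)+m = 0 := by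
  have hP1 : p1*(x1*y2-x2*y1) = r2*(y2-x2) := by linear_combination y2*hpx - x2*hpy
  have hP2 : p2*(x1*y2-x2*y1) = r2*(x1-y1) := by linear_combination x1*hpy - y1*hpx
  refine mul_right_cancel₀ (pow_ne_zero 2 hδ) ?_
  linear_combination hN + (p1*(x1*y2-x2*y1) + r2*(y2-x2) - 2*w1*(x1*y2-x2*y1))*hP1
    + (p2*(x1*y2-x2*y1) + r2*(x1-y1) - 2*w2*(x1*y2-x2*y1))*hP2
/-- **Polar porism** (Proposition 3.1 ii): the pole of the line `B₁C₁` lies on the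
circumcircle `Γp` of the polar triangle. -/
theorem polar_porism
    (Γ Γp : EuclideanGeometry.Sphere Pt) (A B C D : Pt) (r : ℝ) (hr : 0 < r)
    (hABC : ¬ Collinear ℝ ({A, B, C} : Set Pt))
    (hA : A ∈ Γ) (hB : B ∈ Γ) (hC : C ∈ Γ) (hD : D ∉ Γ)
    (hDa : D ∉ L B C) (hDb : D ∉ L C A) (hDc : D ∉ L A B)
    (Fa Fb Fc Ap Bp Cp : Pt)
    (hFa : IsFoot D B C Fa) (hFb : IsFoot D C A Fb) (hFc : IsFoot D A B Fc)
    (hAp : Ap = invPt D r Fa) (hBp : Bp = invPt D r Fb) (hCp : Cp = invPt D r Fc)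
    (hpnc : ¬ Collinear ℝ ({Ap, Bp, Cp} : Set Pt))
    (hApΓ : Ap ∈ Γp) (hBpΓ : Bp ∈ Γp) (hCpΓ : Cp ∈ Γp)
    (A₁ B₁p C₁p C₁ B₁ : Pt)
    (hA₁ : A₁ ∈ Γ) (hA₁D : A₁ ≠ D)
    (hB₁p : B₁p ∈ Γp) (hC₁p : C₁p ∈ Γp) (hne : B₁p ≠ C₁p)
    (hB₁pD : B₁p ≠ D) (hC₁pD : C₁p ≠ D)
    (hB₁pPol : B₁p ∈ polar D r A₁) (hC₁pPol : C₁p ∈ polar D r A₁)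
    (hC₁ : C₁ ∈ Γ) (hC₁A₁ : C₁ ≠ A₁) (hC₁Pol : C₁ ∈ polar D r B₁p)
    (hB₁ : B₁ ∈ Γ) (hB₁A₁ : B₁ ≠ A₁) (hB₁Pol : B₁ ∈ polar D r C₁p)
    (hB₁C₁ : B₁ ≠ C₁) (hDl : D ∉ L B₁ C₁)
    (F₁ : Pt) (hF₁ : IsFoot D B₁ C₁ F₁) :
    invPt D r F₁ ∈ Γp := by
  classical
  have hAB : A ≠ B := by
    rintro rfl; exact hABC (by simpa using collinear_pair ℝ A C)
  have hBC : B ≠ C := by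
    rintro rfl; exact hABC (by simpa using collinear_pair ℝ A B)
  have hCA : C ≠ A := by
    intro h; subst h; exact hABC (by simpa using collinear_pair ℝ B C)
  have hBD : B ≠ D := fun h => hD (h ▸ hB)
  have hCD : C ≠ D := fun h => hD (h ▸ hC)
  have hAD : A ≠ D := fun h => hD (h ▸ hA)
  have hB₁D : B₁ ≠ D := fun h => hD (h ▸ hB₁)
  have hR0 : 0 ≤ Γ.radius := by
    have h1 : dist A Γ.center = Γ.radius := hA
    have := dist_nonneg (x := A) (y := Γ.center); linarith
  have hRpos : 0 < Γ.radius := by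
    rcases lt_or_eq_of_le hR0 with h | h
    · exact h
    · exfalso
      have h1 : dist A Γ.center = Γ.radius := hA
      have h2 : dist B Γ.center = Γ.radius := hB
      have hA' : A = Γ.center := by rw [← dist_eq_zero, h1, ← h]
      have hB' : B = Γ.center := by rw [← dist_eq_zero, h2, ← h]
      exact hAB (hA'.trans hB'.symm)
  -- a family of points on Γ
  set K : ℝ → Pt := fun t =>
    !₂[Γ.center 0 + Γ.radius*((1-t^2)/(1+t^2)), Γ.center 1 + Γ.radius*(2*t/(1+t^2))] with hK
  have hKmem : ∀ t : ℝ, K t ∈ Γ := by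
    intro t
    refine sph_mem hR0 ?_
    have ht : (1:ℝ)+t^2 ≠ 0 := by positivity
    show (Γ.center 0 + Γ.radius*((1-t^2)/(1+t^2)) - Γ.center 0)^2
        + (Γ.center 1 + Γ.radius*(2*t/(1+t^2)) - Γ.center 1)^2 = Γ.radius^2
    field_simp
    ring
  have hKinj : Function.Injective K := by
    intro s t hst
    have h0 : Γ.center 0 + Γ.radius*((1-s^2)/(1+s^2)) = Γ.center 0 + Γ.radius*((1-t^2)/(1+t^2)) :=
      congrArg (fun p : Pt => p 0) hst
    have h1 : Γ.center 1 + Γ.radius*(2*s/(1+s^2)) = Γ.center 1 + Γ.radius*(2*t/(1+t^2)) :=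
      congrArg (fun p : Pt => p 1) hst
    have hs2 : (1:ℝ)+s^2 ≠ 0 := by positivity
    have ht2 : (1:ℝ)+t^2 ≠ 0 := by positivity
    have hRne : Γ.radius ≠ 0 := ne_of_gt hRpos
    have e0 : (1-s^2)*(1+t^2) = (1-t^2)*(1+s^2) := by
      have h0' : Γ.radius*((1-s^2)/(1+s^2)) = Γ.radius*((1-t^2)/(1+t^2)) := by linarith
      have h0'' : (1-s^2)/(1+s^2) = (1-t^2)/(1+t^2) := mul_left_cancel₀ hRne h0'
      field_simp at h0''
      linarith [h0'']
    have e1 : 2*s*(1+t^2) = 2*t*(1+s^2) := by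
      have h1' : Γ.radius*(2*s/(1+s^2)) = Γ.radius*(2*t/(1+t^2)) := by linarith
      have h1'' : 2*s/(1+s^2) = 2*t/(1+t^2) := mul_left_cancel₀ hRne h1'
      field_simp at h1''
      linarith [h1'']
    have hst2 : s^2 = t^2 := by nlinarith [e0]
    have h2 : (s-t)*(1-s*t) = 0 := by linear_combination e1/2
    rcases mul_eq_zero.mp h2 with h' | h'
    · linarith
    · have hst1 : s*t = 1 := by linarith
      have ht4 : t^4 = 1 := by nlinarith [hst2, hst1]
      have ht2' : (t^2-1)*(t^2+1) = 0 := by linear_combination ht4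
      have ht1 : t^2 = 1 := by
        rcases mul_eq_zero.mp ht2' with h'' | h''
        · linarith
        · nlinarith [sq_nonneg t]
      linear_combination t*hst1 - s*ht1
  -- choose E on Γ avoiding the six special points
  have hbadcard : ({A, B, C, A₁, B₁, C₁} : Finset Pt).card ≤ 6 := by
    have c1 := Finset.card_insert_le A ({B, C, A₁, B₁, C₁} : Finset Pt)
    have c2 := Finset.card_insert_le B ({C, A₁, B₁, C₁} : Finset Pt)
    have c3 := Finset.card_insert_le C ({A₁, B₁, C₁} : Finset Pt)
    have c4 := Finset.card_insert_le A₁ ({B₁, C₁} : Finset Pt)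
    have c5 := Finset.card_insert_le B₁ ({C₁} : Finset Pt)
    have c6 : ({C₁} : Finset Pt).card = 1 := Finset.card_singleton _
    omega
  have hEex : ∃ t : ℝ, K t ∉ ({A, B, C, A₁, B₁, C₁} : Finset Pt) := by
    by_contra hcon
    push_neg at hcon
    have hsub : (((Finset.range 7).image (Nat.cast : ℕ → ℝ)).image K)
        ⊆ ({A, B, C, A₁, B₁, C₁} : Finset Pt) := by
      intro x hx
      obtain ⟨t, _, rfl⟩ := Finset.mem_image.mp hx
      exact hcon t
    have hc1 : (((Finset.range 7).image (Nat.cast : ℕ → ℝ)).image K).card = 7 := by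
      rw [Finset.card_image_of_injective _ hKinj,
        Finset.card_image_of_injective _ Nat.cast_injective, Finset.card_range]
    have := Finset.card_le_card hsub
    omega
  obtain ⟨tE, hEbad⟩ := hEex
  have hEΓ : K tE ∈ Γ := hKmem tE
  set E := K tE with hEdef
  simp only [Finset.mem_insert, Finset.mem_singleton] at hEbad
  push_neg at hEbad
  obtain ⟨hEA, hEB, hEC, hEA₁, hEB₁, hEC₁⟩ := hEbad
  -- pole equations for the feet
  obtain ⟨hApB, hApC⟩ := pole_from_foot (r := r) hDa hFa
  obtain ⟨hBpC, hBpA⟩ := pole_from_foot (r := r) hDb hFb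
  obtain ⟨hCpA, hCpB⟩ := pole_from_foot (r := r) hDc hFc
  rw [← hAp] at hApB hApC
  rw [← hBp] at hBpC hBpA
  rw [← hCp] at hCpA hCpB
  obtain ⟨hP₁B, hP₁C⟩ := pole_from_foot (r := r) hDl hF₁
  -- cross products are nonzero
  have hcrB₁C₁ : (B₁ 0 - D 0)*(C₁ 1 - D 1) - (B₁ 1 - D 1)*(C₁ 0 - D 0) ≠ 0 := by
    intro h; exact hDl (mem_line_of_cross hB₁C₁ hB₁D h)
  -- N-equations for the reference triangle
  have hNbc := N_of_pole (Γp.center 0 - D 0) (Γp.center 1 - D 1)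
      ((Γp.center 0 - D 0)^2+(Γp.center 1 - D 1)^2 - Γp.radius^2) (r^2)
      (B 0 - D 0) (B 1 - D 1) (C 0 - D 0) (C 1 - D 1) (Ap 0 - D 0) (Ap 1 - D 1)
      (by linear_combination hApB) (by linear_combination hApC)
      (by linear_combination sph_coords hApΓ)
  have hNca := N_of_pole (Γp.center 0 - D 0) (Γp.center 1 - D 1)
      ((Γp.center 0 - D 0)^2+(Γp.center 1 - D 1)^2 - Γp.radius^2) (r^2)
      (C 0 - D 0) (C 1 - D 1) (A 0 - D 0) (A 1 - D 1) (Bp 0 - D 0) (Bp 1 - D 1)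
      (by linear_combination hBpC) (by linear_combination hBpA)
      (by linear_combination sph_coords hBpΓ)
  have hNab := N_of_pole (Γp.center 0 - D 0) (Γp.center 1 - D 1)
      ((Γp.center 0 - D 0)^2+(Γp.center 1 - D 1)^2 - Γp.radius^2) (r^2)
      (A 0 - D 0) (A 1 - D 1) (B 0 - D 0) (B 1 - D 1) (Cp 0 - D 0) (Cp 1 - D 1)
      (by linear_combination hCpA) (by linear_combination hCpB)
      (by linear_combination sph_coords hCpΓ)
  -- polar line equations
  have hba' := polar_line hA₁D hB₁pPol
  have hbc' := polar_line hB₁pD hC₁Pol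
  have hda' := polar_line hA₁D hC₁pPol
  have hdb' := polar_line hC₁pD hB₁Pol
  -- the main scalar computation
  have hNmain := scalar_main (Γ.center 0 - D 0) (Γ.center 1 - D 1) (Γ.radius^2)
      (Γp.center 0 - D 0) (Γp.center 1 - D 1)
      ((Γp.center 0 - D 0)^2+(Γp.center 1 - D 1)^2 - Γp.radius^2) (r^2)
      (E 0 - D 0) (E 1 - D 1)
      (A 0 - D 0) (A 1 - D 1) (B 0 - D 0) (B 1 - D 1) (C 0 - D 0) (C 1 - D 1)
      (A₁ 0 - D 0) (A₁ 1 - D 1) (B₁ 0 - D 0) (B₁ 1 - D 1) (C₁ 0 - D 0) (C₁ 1 - D 1)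
      (B₁p 0 - D 0) (B₁p 1 - D 1) (C₁p 0 - D 0) (C₁p 1 - D 1)
      (pow_ne_zero 2 (ne_of_gt hr))
      (by linear_combination sph_coords hA) (by linear_combination sph_coords hB)
      (by linear_combination sph_coords hC) (by linear_combination sph_coords hA₁)
      (by linear_combination sph_coords hB₁) (by linear_combination sph_coords hC₁)
      (by linear_combination sph_coords hEΓ)
      (by linear_combination sph_coords hB₁p) (by linear_combination sph_coords hC₁p)
      (by linear_combination hba') (by linear_combination hbc')
      (by linear_combination hda') (by linear_combination hdb')
      hNbc hNca hNab
      (by rintro ⟨h1, h2⟩; exact hAB (pt_ext (by linarith) (by linarith)))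
      (by rintro ⟨h1, h2⟩; exact hBC (pt_ext (by linarith) (by linarith)))
      (by rintro ⟨h1, h2⟩; exact hCA (pt_ext (by linarith) (by linarith)))
      (by rintro ⟨h1, h2⟩; exact hC₁A₁ (pt_ext (by linarith) (by linarith)))
      (by rintro ⟨h1, h2⟩; exact hB₁A₁ (pt_ext (by linarith) (by linarith)))
      (by rintro ⟨h1, h2⟩; exact hB₁C₁ (pt_ext (by linarith) (by linarith)))
      (by rintro ⟨h1, h2⟩; exact hEA (pt_ext (by linarith) (by linarith)))
      (by rintro ⟨h1, h2⟩; exact hEB (pt_ext (by linarith) (by linarith)))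
      (by rintro ⟨h1, h2⟩; exact hEC (pt_ext (by linarith) (by linarith)))
      (by rintro ⟨h1, h2⟩; exact hEA₁ (pt_ext (by linarith) (by linarith)))
      (by rintro ⟨h1, h2⟩; exact hEB₁ (pt_ext (by linarith) (by linarith)))
      (by rintro ⟨h1, h2⟩; exact hEC₁ (pt_ext (by linarith) (by linarith)))
      (by rintro ⟨h1, h2⟩; exact hne (pt_ext (by linarith) (by linarith)))
      (by rintro ⟨h1, h2⟩; exact hB₁pD (pt_ext (by linarith) (by linarith)))
      (by rintro ⟨h1, h2⟩; exact hC₁pD (pt_ext (by linarith) (by linarith)))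
      (by rintro ⟨h1, h2⟩; exact hA₁D (pt_ext (by linarith) (by linarith)))
  -- transfer to the pole of B₁C₁
  have hqpP₁ := qp_of_pole (Γp.center 0 - D 0) (Γp.center 1 - D 1)
      ((Γp.center 0 - D 0)^2+(Γp.center 1 - D 1)^2 - Γp.radius^2) (r^2)
      (B₁ 0 - D 0) (B₁ 1 - D 1) (C₁ 0 - D 0) (C₁ 1 - D 1)
      ((invPt D r F₁) 0 - D 0) ((invPt D r F₁) 1 - D 1)
      hcrB₁C₁ (by linear_combination hP₁B) (by linear_combination hP₁C)
      (by linear_combination hNmain)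
  have hgp0 : 0 ≤ Γp.radius := by
    have h1 : dist B₁p Γp.center = Γp.radius := hB₁p
    linarith [dist_nonneg (x := B₁p) (y := Γp.center)]
  exact sph_mem hgp0 (by linear_combination hqpP₁)
end
end

section
/- Let A, B, C be noncollinear points in the Euclidean plane and let D be a point with D ∉ {A, B, C} and D not on any of the lines BC, CA, AB. Let A', B', C' be pairwise distinct points satisfying ⟪A' − B, B − D⟫ = 0, ⟪A' − C, C − D⟫ = 0, ⟪B' − C, C − D⟫ = 0, ⟪B' − A, A − D⟫ = 0, ⟪C' − A, A − D⟫ = 0, ⟪C' − B, B − D⟫ = 0 (so that A'B'C' is the negative-pedal triangle of ABC with respect to D). Then the orthogonal projection of D onto the line B'C' is A, the orthogonal projection of D onto the line C'A' is B, and the orthogonal projection of D onto the line A'B' is C. Consequently, the pedal circle of the triangle A'B'C' with respect to D is the circumcircle of ABC. -/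
open EuclideanGeometry

noncomputable section

lemma foot_aux (D F X Y : Pt) (hF : F ≠ D) (hXY : X ≠ Y)
    (hX : (inner ℝ (X - F) (F - D) : ℝ) = 0) (hY : (inner ℝ (Y - F) (F - D) : ℝ) = 0) :
    IsFoot D X Y F := by
  constructor
  · -- F lies on line XY
    set w : Pt := F - D with hw_def
    have hw : w ≠ 0 := sub_ne_zero.mpr hF
    set S : Submodule ℝ Pt := (ℝ ∙ w)ᗮ with hS_def
    have hXS : X - F ∈ S := Submodule.mem_orthogonal_singleton_iff_inner_left.mpr hX
    have hYS : Y - F ∈ S := Submodule.mem_orthogonal_singleton_iff_inner_left.mpr hY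
    have hXYS : X - Y ∈ S := by
      have : X - Y = (X - F) - (Y - F) := by abel
      rw [this]; exact S.sub_mem hXS hYS
    have hXYne : X - Y ≠ 0 := sub_ne_zero.mpr hXY
    have hdim : Module.finrank ℝ S = 1 := by
      have h2 : Module.finrank ℝ Pt = 2 := finrank_euclideanSpace_fin
      have hsum := Submodule.finrank_add_finrank_orthogonal (𝕜 := ℝ) (ℝ ∙ w)
      have hs : Module.finrank ℝ (ℝ ∙ w) = 1 := finrank_span_singleton hw
      rw [hs, show Module.finrank ℝ Pt = 2 from h2] at hsum
      rw [hS_def]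
      omega
    have hex : ∀ u : S, ∃ c : ℝ, c • (⟨X - Y, hXYS⟩ : S) = u := by
      exact (finrank_eq_one_iff_of_nonzero' (⟨X - Y, hXYS⟩ : S)
        (by simp [Subtype.ext_iff, hXYne])).mp hdim
    obtain ⟨c, hc⟩ := hex ⟨X - F, hXS⟩
    have hc' : c • (X - Y) = X - F := congrArg Subtype.val hc
    have hFeq : F = (-c) • (X - Y) +ᵥ X := by
      rw [vadd_eq_add]
      linear_combination (norm := module) hc'
    rw [hFeq]
    refine AffineSubspace.vadd_mem_of_mem_direction ?_ ?_
    · rw [L, direction_affineSpan]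
      exact Submodule.smul_mem _ _ <| by
        simpa using vsub_mem_vectorSpan ℝ (Set.mem_insert X {Y})
          (Set.mem_insert_of_mem X rfl)
    · exact subset_affineSpan ℝ _ (Set.mem_insert X {Y})
  · have e : X - Y = (X - F) - (Y - F) := by abel
    have e2 : D - F = -(F - D) := by abel
    have hX' : (inner ℝ (F - D) (X - F) : ℝ) = 0 := by rw [real_inner_comm]; exact hX
    have hY' : (inner ℝ (F - D) (Y - F) : ℝ) = 0 := by rw [real_inner_comm]; exact hY
    rw [e, e2, inner_neg_left, inner_sub_right, hX', hY']
    ring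

/-- **Proposition 4.2**: the orthogonal projections of `D` onto the sides of the
negative-pedal triangle `A'B'C'` of `ABC` w.r.t. `D` are the vertices `A`, `B`, `C`;
hence the pedal circle of `A'B'C'` w.r.t. `D` is the circumcircle of `ABC`. -/
theorem negative_pedal_triangle_feet
    (A B C D A' B' C' : Pt)
    (hABC : ¬ Collinear ℝ ({A, B, C} : Set Pt))
    (hDv : D ∉ ({A, B, C} : Set Pt))
    (hDa : D ∉ L B C) (hDb : D ∉ L C A) (hDc : D ∉ L A B)
    (hd1 : A' ≠ B') (hd2 : B' ≠ C') (hd3 : A' ≠ C')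
    (h1 : (inner ℝ (A' - B) (B - D) : ℝ) = 0) (h2 : (inner ℝ (A' - C) (C - D) : ℝ) = 0)
    (h3 : (inner ℝ (B' - C) (C - D) : ℝ) = 0) (h4 : (inner ℝ (B' - A) (A - D) : ℝ) = 0)
    (h5 : (inner ℝ (C' - A) (A - D) : ℝ) = 0) (h6 : (inner ℝ (C' - B) (B - D) : ℝ) = 0) :
    IsFoot D B' C' A ∧ IsFoot D C' A' B ∧ IsFoot D A' B' C := by
  simp only [Set.mem_insert_iff, Set.mem_singleton_iff, not_or] at hDv
  obtain ⟨hDA, hDB, hDC⟩ := hDv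
  exact ⟨foot_aux D A B' C' (Ne.symm hDA) hd2 h4 h5,
    foot_aux D B C' A' (Ne.symm hDB) hd3.symm h6 h1,
    foot_aux D C A' B' (Ne.symm hDC) hd1 h2 h3⟩
end
end

section
/- Let A, B, C be noncollinear points in the Euclidean plane, let D be a point with D ∉ {A, B, C} and D not on any of the lines BC, CA, AB, and let r > 0, with ι the inversion of center D and radius r. Let A_p = ι(F_A), B_p = ι(F_B), C_p = ι(F_C), where F_A, F_B, F_C are the orthogonal projections of D onto the lines BC, CA, AB, and assume A_p, B_p, C_p are noncollinear. Let A', B', C' be the vertices of the negative-pedal triangle of ABC with respect to D, assumed pairwise distinct. Then the triangles A'B'C' and A_pB_pC_p are homothetic: there exists a real number k ≠ 0 such that A' − B' = k • (A_p − B_p), B' − C' = k • (B_p − C_p), and C' − A' = k • (C_p − A_p). -/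
open EuclideanGeometry

noncomputable section

lemma myInner (u v : Pt) : (inner ℝ u v : ℝ) = u 0 * v 0 + u 1 * v 1 := by
  simp [PiLp.inner_apply, RCLike.inner_apply, Fin.sum_univ_two]
  ring

lemma myNormSq (u : Pt) : ‖u‖ ^ 2 = u 0 ^ 2 + u 1 ^ 2 := by
  rw [EuclideanSpace.norm_eq, Real.sq_sqrt (by positivity), Fin.sum_univ_two]
  simp

lemma myExt {u v : Pt} (h0 : u 0 = v 0) (h1 : u 1 = v 1) : u = v := by
  ext i; fin_cases i <;> assumption

lemma mySqSumNe {u v : Pt} (h : u ≠ v) : (u 0 - v 0) ^ 2 + (u 1 - v 1) ^ 2 ≠ 0 := by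
  intro h0
  apply h
  have e0 : (u 0 - v 0) ^ 2 = 0 := by nlinarith [sq_nonneg (u 0 - v 0), sq_nonneg (u 1 - v 1)]
  have e1 : (u 1 - v 1) ^ 2 = 0 := by nlinarith [sq_nonneg (u 0 - v 0), sq_nonneg (u 1 - v 1)]
  have e0' : u 0 - v 0 = 0 := by
    have := pow_eq_zero_iff (n := 2) (by norm_num) |>.mp e0; exact this
  have e1' : u 1 - v 1 = 0 := by
    have := pow_eq_zero_iff (n := 2) (by norm_num) |>.mp e1; exact this
  exact myExt (by linarith) (by linarith)

lemma mySmul {u v : Pt} (hv : v ≠ 0) (h : u 0 * v 1 - u 1 * v 0 = 0) : ∃ k : ℝ, u = k • v := by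
  by_cases h0 : v 0 = 0
  · have h1 : v 1 ≠ 0 := by
      intro h1
      apply hv
      refine myExt ?_ ?_ <;> simp [h0, h1]
    refine ⟨u 1 / v 1, myExt ?_ ?_⟩
    · simp only [PiLp.smul_apply, smul_eq_mul]
      field_simp
      linear_combination h
    · simp only [PiLp.smul_apply, smul_eq_mul]
      field_simp
  · refine ⟨u 0 / v 0, myExt ?_ ?_⟩
    · simp only [PiLp.smul_apply, smul_eq_mul]
      field_simp
    · simp only [PiLp.smul_apply, smul_eq_mul]
      field_simp
      linear_combination -h

lemma myNcol {P Q R : Pt} (h : ¬ Collinear ℝ ({P, Q, R} : Set Pt)) :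
    (Q 0 - P 0) * (R 1 - P 1) - (Q 1 - P 1) * (R 0 - P 0) ≠ 0 := by
  intro h0
  apply h
  by_cases hQP : Q = P
  · rw [hQP]
    exact (collinear_pair ℝ P R).subset (by intro x hx; simp at hx ⊢; tauto)
  · rw [collinear_iff_of_mem (Set.mem_insert P {Q, R})]
    refine ⟨Q - P, fun p hp => ?_⟩
    simp only [Set.mem_insert_iff, Set.mem_singleton_iff] at hp
    rcases hp with rfl | rfl | rfl
    · exact ⟨0, by simp⟩
    · refine ⟨1, ?_⟩
      show p = (1 : ℝ) • (p - P) + P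
      rw [one_smul]; abel
    · have hne : Q - P ≠ 0 := sub_ne_zero.2 hQP
      have hcr : (p - P) 0 * (Q - P) 1 - (p - P) 1 * (Q - P) 0 = 0 := by
        simp only [PiLp.sub_apply]
        linear_combination -h0
      obtain ⟨k, hk⟩ := mySmul hne hcr
      refine ⟨k, ?_⟩
      show p = k • (Q - P) + P
      rw [← hk]; abel

lemma myParam {P Q R : Pt} (h : P ∈ L Q R) : ∃ t : ℝ, t • (R - Q) + Q = P := by
  have h2 : (P - Q) +ᵥ Q ∈ line[ℝ, Q, R] := by simpa [L] using h
  rw [vadd_left_mem_affineSpan_pair] at h2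
  obtain ⟨t, ht⟩ := h2
  exact ⟨t, by simp at ht ⊢; rw [ht]; abel⟩

theorem key_cross (x0 x1 y0 y1 z0 z1 R u0 u1 v0 v1 m0 m1 n0 n1 : ℝ)
    (hf : y0*z1 - y1*z0 ≠ 0) (hg : z0*x1 - z1*x0 ≠ 0)
    (hu0 : u0 * (y0*z1 - y1*z0) = (y0^2+y1^2)*z1 - (z0^2+z1^2)*y1)
    (hu1 : u1 * (y0*z1 - y1*z0) = (z0^2+z1^2)*y0 - (y0^2+y1^2)*z0)
    (hv0 : v0 * (z0*x1 - z1*x0) = (z0^2+z1^2)*x1 - (x0^2+x1^2)*z1)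
    (hv1 : v1 * (z0*x1 - z1*x0) = (x0^2+x1^2)*z0 - (z0^2+z1^2)*x0)
    (hm0 : m0 * (y0*z1 - y1*z0)^2
      = R * ((z0^2+z1^2 - (y0*z0+y1*z1))*y0 + (y0^2+y1^2 - (y0*z0+y1*z1))*z0))
    (hm1 : m1 * (y0*z1 - y1*z0)^2
      = R * ((z0^2+z1^2 - (y0*z0+y1*z1))*y1 + (y0^2+y1^2 - (y0*z0+y1*z1))*z1))
    (hn0 : n0 * (z0*x1 - z1*x0)^2
      = R * ((x0^2+x1^2 - (z0*x0+z1*x1))*z0 + (z0^2+z1^2 - (z0*x0+z1*x1))*x0))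
    (hn1 : n1 * (z0*x1 - z1*x0)^2
      = R * ((x0^2+x1^2 - (z0*x0+z1*x1))*z1 + (z0^2+z1^2 - (z0*x0+z1*x1))*x1)) :
    (u0 - v0)*(m1 - n1) - (u1 - v1)*(m0 - n0) = 0 := by
  have e1 : u0 = ((y0^2+y1^2)*z1 - (z0^2+z1^2)*y1) / (y0*z1 - y1*z0) :=
    by field_simp; linear_combination hu0
  have e2 : u1 = ((z0^2+z1^2)*y0 - (y0^2+y1^2)*z0) / (y0*z1 - y1*z0) :=
    eq_div_of_mul_eq hf (by linear_combination hu1)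
  have e3 : v0 = ((z0^2+z1^2)*x1 - (x0^2+x1^2)*z1) / (z0*x1 - z1*x0) :=
    by field_simp; linear_combination hv0
  have e4 : v1 = ((x0^2+x1^2)*z0 - (z0^2+z1^2)*x0) / (z0*x1 - z1*x0) :=
    eq_div_of_mul_eq hg (by linear_combination hv1)
  have e5 : m0 = R * ((z0^2+z1^2 - (y0*z0+y1*z1))*y0 + (y0^2+y1^2 - (y0*z0+y1*z1))*z0)
      / (y0*z1 - y1*z0)^2 := eq_div_of_mul_eq (pow_ne_zero 2 hf) (by linear_combination hm0)
  have e6 : m1 = R * ((z0^2+z1^2 - (y0*z0+y1*z1))*y1 + (y0^2+y1^2 - (y0*z0+y1*z1))*z1)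
      / (y0*z1 - y1*z0)^2 := eq_div_of_mul_eq (pow_ne_zero 2 hf) (by linear_combination hm1)
  have e7 : n0 = R * ((x0^2+x1^2 - (z0*x0+z1*x1))*z0 + (z0^2+z1^2 - (z0*x0+z1*x1))*x0)
      / (z0*x1 - z1*x0)^2 := eq_div_of_mul_eq (pow_ne_zero 2 hg) (by linear_combination hn0)
  have e8 : n1 = R * ((x0^2+x1^2 - (z0*x0+z1*x1))*z1 + (z0^2+z1^2 - (z0*x0+z1*x1))*x1)
      / (z0*x1 - z1*x0)^2 := eq_div_of_mul_eq (pow_ne_zero 2 hg) (by linear_combination hn1)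
  rw [e1, e2, e3, e4, e5, e6, e7, e8]
  field_simp
  ring

set_option maxHeartbeats 4000000 in
/-- **Proposition 4.6**: the negative-pedal triangle `A'B'C'` and the polar triangle
`ApBpCp` of `ABC` w.r.t. `D` are homothetic. -/
theorem negative_pedal_homothetic_polar
    (A B C D : Pt) (r : ℝ) (hr : 0 < r)
    (hABC : ¬ Collinear ℝ ({A, B, C} : Set Pt))
    (hDv : D ∉ ({A, B, C} : Set Pt))
    (hDa : D ∉ L B C) (hDb : D ∉ L C A) (hDc : D ∉ L A B)
    (Fa Fb Fc Ap Bp Cp : Pt)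
    (hFa : IsFoot D B C Fa) (hFb : IsFoot D C A Fb) (hFc : IsFoot D A B Fc)
    (hAp : Ap = invPt D r Fa) (hBp : Bp = invPt D r Fb) (hCp : Cp = invPt D r Fc)
    (hpnc : ¬ Collinear ℝ ({Ap, Bp, Cp} : Set Pt))
    (A' B' C' : Pt)
    (h1 : (inner ℝ (A' - B) (B - D) : ℝ) = 0) (h2 : (inner ℝ (A' - C) (C - D) : ℝ) = 0)
    (h3 : (inner ℝ (B' - C) (C - D) : ℝ) = 0) (h4 : (inner ℝ (B' - A) (A - D) : ℝ) = 0)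
    (h5 : (inner ℝ (C' - A) (A - D) : ℝ) = 0) (h6 : (inner ℝ (C' - B) (B - D) : ℝ) = 0)
    (hd1 : A' ≠ B') (hd2 : B' ≠ C') (hd3 : A' ≠ C') :
    ∃ k : ℝ, k ≠ 0 ∧ A' - B' = k • (Ap - Bp) ∧ B' - C' = k • (Bp - Cp) ∧
      C' - A' = k • (Cp - Ap) := by
  -- distinctness of vertices
  have hBC : B ≠ C := by
    intro h; apply hABC; rw [h]
    exact (collinear_pair ℝ A C).subset (by intro x hx; simp at hx ⊢; tauto)
  have hCA : C ≠ A := by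
    intro h; apply hABC; rw [h]
    exact (collinear_pair ℝ A B).subset (by intro x hx; simp at hx ⊢; tauto)
  have hAB : A ≠ B := by
    intro h; apply hABC; rw [h]
    exact (collinear_pair ℝ B C).subset (by intro x hx; simp at hx ⊢; tauto)
  -- nondegenerate crosses
  have hf : (B 0 - D 0) * (C 1 - D 1) - (B 1 - D 1) * (C 0 - D 0) ≠ 0 := by
    apply myNcol (P := D) (Q := B) (R := C)
    intro hc
    exact hDa (hc.mem_affineSpan_of_mem_of_ne (by simp) (by simp) (by simp) hBC)
  have hg : (C 0 - D 0) * (A 1 - D 1) - (C 1 - D 1) * (A 0 - D 0) ≠ 0 := by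
    apply myNcol (P := D) (Q := C) (R := A)
    intro hc
    exact hDb (hc.mem_affineSpan_of_mem_of_ne (by simp) (by simp) (by simp) hCA)
  have he : (A 0 - D 0) * (B 1 - D 1) - (A 1 - D 1) * (B 0 - D 0) ≠ 0 := by
    apply myNcol (P := D) (Q := A) (R := B)
    intro hc
    exact hDc (hc.mem_affineSpan_of_mem_of_ne (by simp) (by simp) (by simp) hAB)
  have ch1 : (A' 0 - B 0) * (B 0 - D 0) + (A' 1 - B 1) * (B 1 - D 1) = 0 := by
    rw [myInner] at h1
    simpa using h1
  have ch2 : (A' 0 - C 0) * (C 0 - D 0) + (A' 1 - C 1) * (C 1 - D 1) = 0 := by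
    rw [myInner] at h2
    simpa using h2
  have ch3 : (B' 0 - C 0) * (C 0 - D 0) + (B' 1 - C 1) * (C 1 - D 1) = 0 := by
    rw [myInner] at h3
    simpa using h3
  have ch4 : (B' 0 - A 0) * (A 0 - D 0) + (B' 1 - A 1) * (A 1 - D 1) = 0 := by
    rw [myInner] at h4
    simpa using h4
  have ch5 : (C' 0 - A 0) * (A 0 - D 0) + (C' 1 - A 1) * (A 1 - D 1) = 0 := by
    rw [myInner] at h5
    simpa using h5
  have ch6 : (C' 0 - B 0) * (B 0 - D 0) + (C' 1 - B 1) * (B 1 - D 1) = 0 := by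
    rw [myInner] at h6
    simpa using h6
  have cha'0 : (A' 0 - D 0) * ((B 0 - D 0) * (C 1 - D 1) - (B 1 - D 1) * (C 0 - D 0)) = ((B 0 - D 0)^2 + (B 1 - D 1)^2) * (C 1 - D 1) - ((C 0 - D 0)^2 + (C 1 - D 1)^2) * (B 1 - D 1) := by
    linear_combination (C 1 - D 1) * ch1 - (B 1 - D 1) * ch2
  have cha'1 : (A' 1 - D 1) * ((B 0 - D 0) * (C 1 - D 1) - (B 1 - D 1) * (C 0 - D 0)) = ((C 0 - D 0)^2 + (C 1 - D 1)^2) * (B 0 - D 0) - ((B 0 - D 0)^2 + (B 1 - D 1)^2) * (C 0 - D 0) := by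
    linear_combination (-(C 0 - D 0)) * ch1 + (B 0 - D 0) * ch2
  have chb'0 : (B' 0 - D 0) * ((C 0 - D 0) * (A 1 - D 1) - (C 1 - D 1) * (A 0 - D 0)) = ((C 0 - D 0)^2 + (C 1 - D 1)^2) * (A 1 - D 1) - ((A 0 - D 0)^2 + (A 1 - D 1)^2) * (C 1 - D 1) := by
    linear_combination (A 1 - D 1) * ch3 - (C 1 - D 1) * ch4
  have chb'1 : (B' 1 - D 1) * ((C 0 - D 0) * (A 1 - D 1) - (C 1 - D 1) * (A 0 - D 0)) = ((A 0 - D 0)^2 + (A 1 - D 1)^2) * (C 0 - D 0) - ((C 0 - D 0)^2 + (C 1 - D 1)^2) * (A 0 - D 0) := by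
    linear_combination (-(A 0 - D 0)) * ch3 + (C 0 - D 0) * ch4
  have chc'0 : (C' 0 - D 0) * ((A 0 - D 0) * (B 1 - D 1) - (A 1 - D 1) * (B 0 - D 0)) = ((A 0 - D 0)^2 + (A 1 - D 1)^2) * (B 1 - D 1) - ((B 0 - D 0)^2 + (B 1 - D 1)^2) * (A 1 - D 1) := by
    linear_combination (B 1 - D 1) * ch5 - (A 1 - D 1) * ch6
  have chc'1 : (C' 1 - D 1) * ((A 0 - D 0) * (B 1 - D 1) - (A 1 - D 1) * (B 0 - D 0)) = ((B 0 - D 0)^2 + (B 1 - D 1)^2) * (A 0 - D 0) - ((A 0 - D 0)^2 + (A 1 - D 1)^2) * (B 0 - D 0) := by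
    linear_combination (-(B 0 - D 0)) * ch5 + (A 0 - D 0) * ch6
  -- foot Fa on line BC, pole Ap
  have hneBC : B ≠ C := by assumption
  have hNFa : (B 0 - C 0)^2 + (B 1 - C 1)^2 ≠ 0 := mySqSumNe hneBC
  obtain ⟨tFa, htFa⟩ := myParam hFa.1
  have hcFa0 : Fa 0 = tFa * (C 0 - B 0) + B 0 := by rw [← htFa]; simp
  have hcFa1 : Fa 1 = tFa * (C 1 - B 1) + B 1 := by rw [← htFa]; simp
  have corthFa : (D 0 - Fa 0) * (B 0 - C 0) + (D 1 - Fa 1) * (B 1 - C 1) = 0 := by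
    have h' := hFa.2
    rw [myInner] at h'
    simpa using h'
  have htFa' : tFa * ((B 0 - C 0)^2 + (B 1 - C 1)^2) = (D 0 - B 0) * (C 0 - B 0) + (D 1 - B 1) * (C 1 - B 1) := by
    linear_combination corthFa + (B 0 - C 0) * hcFa0 + (B 1 - C 1) * hcFa1
  have hPaFa0 : (Fa 0 - D 0) * ((B 0 - C 0)^2 + (B 1 - C 1)^2) = (((C 0 - D 0)^2 + (C 1 - D 1)^2) - ((B 0 - D 0) * (C 0 - D 0) + (B 1 - D 1) * (C 1 - D 1))) * (B 0 - D 0) + (((B 0 - D 0)^2 + (B 1 - D 1)^2) - ((B 0 - D 0) * (C 0 - D 0) + (B 1 - D 1) * (C 1 - D 1))) * (C 0 - D 0) := by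
    linear_combination ((B 0 - C 0)^2 + (B 1 - C 1)^2) * hcFa0 + (C 0 - B 0) * htFa'
  have hPaFa1 : (Fa 1 - D 1) * ((B 0 - C 0)^2 + (B 1 - C 1)^2) = (((C 0 - D 0)^2 + (C 1 - D 1)^2) - ((B 0 - D 0) * (C 0 - D 0) + (B 1 - D 1) * (C 1 - D 1))) * (B 1 - D 1) + (((B 0 - D 0)^2 + (B 1 - D 1)^2) - ((B 0 - D 0) * (C 0 - D 0) + (B 1 - D 1) * (C 1 - D 1))) * (C 1 - D 1) := by
    linear_combination ((B 0 - C 0)^2 + (B 1 - C 1)^2) * hcFa1 + (C 1 - B 1) * htFa'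
  have hFaD : Fa ≠ D := by
    intro h'; apply hDa; rw [← h']; exact hFa.1
  have hnFane : (Fa 0 - D 0)^2 + (Fa 1 - D 1)^2 ≠ 0 := mySqSumNe hFaD
  have hnFa2 : ((Fa 0 - D 0)^2 + (Fa 1 - D 1)^2) * ((B 0 - C 0)^2 + (B 1 - C 1)^2)^2 = ((B 0 - D 0) * (C 1 - D 1) - (B 1 - D 1) * (C 0 - D 0))^2 * ((B 0 - C 0)^2 + (B 1 - C 1)^2) := by
    linear_combination ((Fa 0 - D 0) * ((B 0 - C 0)^2 + (B 1 - C 1)^2) + ((((C 0 - D 0)^2 + (C 1 - D 1)^2) - ((B 0 - D 0) * (C 0 - D 0) + (B 1 - D 1) * (C 1 - D 1))) * (B 0 - D 0) + (((B 0 - D 0)^2 + (B 1 - D 1)^2) - ((B 0 - D 0) * (C 0 - D 0) + (B 1 - D 1) * (C 1 - D 1))) * (C 0 - D 0))) * hPaFa0 + ((Fa 1 - D 1) * ((B 0 - C 0)^2 + (B 1 - C 1)^2) + ((((C 0 - D 0)^2 + (C 1 - D 1)^2) - ((B 0 - D 0) * (C 0 - D 0) + (B 1 - D 1) * (C 1 -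 D 1))) * (B 1 - D 1) + (((B 0 - D 0)^2 + (B 1 - D 1)^2) - ((B 0 - D 0) * (C 0 - D 0) + (B 1 - D 1) * (C 1 - D 1))) * (C 1 - D 1))) * hPaFa1
  have hnFa : ((Fa 0 - D 0)^2 + (Fa 1 - D 1)^2) * ((B 0 - C 0)^2 + (B 1 - C 1)^2) = ((B 0 - D 0) * (C 1 - D 1) - (B 1 - D 1) * (C 0 - D 0))^2 :=
    mul_right_cancel₀ hNFa (by linear_combination hnFa2)
  have hnormFa : ‖Fa - D‖ ^ 2 = (Fa 0 - D 0)^2 + (Fa 1 - D 1)^2 := by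
    rw [myNormSq]; simp
  have hcpAp0 : Ap 0 = D 0 + r ^ 2 / ((Fa 0 - D 0)^2 + (Fa 1 - D 1)^2) * (Fa 0 - D 0) := by
    rw [hAp]; simp only [invPt, hnormFa, PiLp.add_apply, PiLp.smul_apply, PiLp.sub_apply, smul_eq_mul]
  have hcpAp1 : Ap 1 = D 1 + r ^ 2 / ((Fa 0 - D 0)^2 + (Fa 1 - D 1)^2) * (Fa 1 - D 1) := by
    rw [hAp]; simp only [invPt, hnormFa, PiLp.add_apply, PiLp.smul_apply, PiLp.sub_apply, smul_eq_mul]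
  have hqAp0 : (Ap 0 - D 0) * ((Fa 0 - D 0)^2 + (Fa 1 - D 1)^2) = r ^ 2 * (Fa 0 - D 0) := by
    rw [hcpAp0]; field_simp; ring
  have hqAp1 : (Ap 1 - D 1) * ((Fa 0 - D 0)^2 + (Fa 1 - D 1)^2) = r ^ 2 * (Fa 1 - D 1) := by
    rw [hcpAp1]; field_simp; ring
  have hpAp0 : (Ap 0 - D 0) * ((B 0 - D 0) * (C 1 - D 1) - (B 1 - D 1) * (C 0 - D 0))^2 = r ^ 2 * ((((C 0 - D 0)^2 + (C 1 - D 1)^2) - ((B 0 - D 0) * (C 0 - D 0) + (B 1 - D 1) * (C 1 - D 1))) * (B 0 - D 0) + (((B 0 - D 0)^2 + (B 1 - D 1)^2) - ((B 0 - D 0) * (C 0 - D 0) + (B 1 - D 1) * (C 1 - D 1))) * (C 0 - D 0)) := by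
    linear_combination ((B 0 - C 0)^2 + (B 1 - C 1)^2) * hqAp0 + r ^ 2 * hPaFa0 - (Ap 0 - D 0) * hnFa
  have hpAp1 : (Ap 1 - D 1) * ((B 0 - D 0) * (C 1 - D 1) - (B 1 - D 1) * (C 0 - D 0))^2 = r ^ 2 * ((((C 0 - D 0)^2 + (C 1 - D 1)^2) - ((B 0 - D 0) * (C 0 - D 0) + (B 1 - D 1) * (C 1 - D 1))) * (B 1 - D 1) + (((B 0 - D 0)^2 + (B 1 - D 1)^2) - ((B 0 - D 0) * (C 0 - D 0) + (B 1 - D 1) * (C 1 - D 1))) * (C 1 - D 1)) := by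
    linear_combination ((B 0 - C 0)^2 + (B 1 - C 1)^2) * hqAp1 + r ^ 2 * hPaFa1 - (Ap 1 - D 1) * hnFa
  -- foot Fb on line CA, pole Bp
  have hneCA : C ≠ A := by assumption
  have hNFb : (C 0 - A 0)^2 + (C 1 - A 1)^2 ≠ 0 := mySqSumNe hneCA
  obtain ⟨tFb, htFb⟩ := myParam hFb.1
  have hcFb0 : Fb 0 = tFb * (A 0 - C 0) + C 0 := by rw [← htFb]; simp
  have hcFb1 : Fb 1 = tFb * (A 1 - C 1) + C 1 := by rw [← htFb]; simp
  have corthFb : (D 0 - Fb 0) * (C 0 - A 0) + (D 1 - Fb 1) * (C 1 - A 1) = 0 := by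
    have h' := hFb.2
    rw [myInner] at h'
    simpa using h'
  have htFb' : tFb * ((C 0 - A 0)^2 + (C 1 - A 1)^2) = (D 0 - C 0) * (A 0 - C 0) + (D 1 - C 1) * (A 1 - C 1) := by
    linear_combination corthFb + (C 0 - A 0) * hcFb0 + (C 1 - A 1) * hcFb1
  have hPaFb0 : (Fb 0 - D 0) * ((C 0 - A 0)^2 + (C 1 - A 1)^2) = (((A 0 - D 0)^2 + (A 1 - D 1)^2) - ((C 0 - D 0) * (A 0 - D 0) + (C 1 - D 1) * (A 1 - D 1))) * (C 0 - D 0) + (((C 0 - D 0)^2 + (C 1 - D 1)^2) - ((C 0 - D 0) * (A 0 - D 0) + (C 1 - D 1) * (A 1 - D 1))) * (A 0 - D 0) := by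
    linear_combination ((C 0 - A 0)^2 + (C 1 - A 1)^2) * hcFb0 + (A 0 - C 0) * htFb'
  have hPaFb1 : (Fb 1 - D 1) * ((C 0 - A 0)^2 + (C 1 - A 1)^2) = (((A 0 - D 0)^2 + (A 1 - D 1)^2) - ((C 0 - D 0) * (A 0 - D 0) + (C 1 - D 1) * (A 1 - D 1))) * (C 1 - D 1) + (((C 0 - D 0)^2 + (C 1 - D 1)^2) - ((C 0 - D 0) * (A 0 - D 0) + (C 1 - D 1) * (A 1 - D 1))) * (A 1 - D 1) := by
    linear_combination ((C 0 - A 0)^2 + (C 1 - A 1)^2) * hcFb1 + (A 1 - C 1) * htFb'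
  have hFbD : Fb ≠ D := by
    intro h'; apply hDb; rw [← h']; exact hFb.1
  have hnFbne : (Fb 0 - D 0)^2 + (Fb 1 - D 1)^2 ≠ 0 := mySqSumNe hFbD
  have hnFb2 : ((Fb 0 - D 0)^2 + (Fb 1 - D 1)^2) * ((C 0 - A 0)^2 + (C 1 - A 1)^2)^2 = ((C 0 - D 0) * (A 1 - D 1) - (C 1 - D 1) * (A 0 - D 0))^2 * ((C 0 - A 0)^2 + (C 1 - A 1)^2) := by
    linear_combination ((Fb 0 - D 0) * ((C 0 - A 0)^2 + (C 1 - A 1)^2) + ((((A 0 - D 0)^2 + (A 1 - D 1)^2) - ((C 0 - D 0) * (A 0 - D 0) + (C 1 - D 1) * (A 1 - D 1))) * (C 0 - D 0) + (((C 0 - D 0)^2 + (C 1 - D 1)^2) - ((C 0 - D 0) * (A 0 - D 0) + (C 1 - D 1) * (A 1 - D 1))) * (A 0 - D 0))) * hPaFb0 + ((Fb 1 - D 1) * ((C 0 - A 0)^2 + (C 1 - A 1)^2) + ((((A 0 - D 0)^2 + (A 1 - D 1)^2) - ((C 0 - D 0) * (A 0 - D 0) + (C 1 - D 1) * (A 1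 - D 1))) * (C 1 - D 1) + (((C 0 - D 0)^2 + (C 1 - D 1)^2) - ((C 0 - D 0) * (A 0 - D 0) + (C 1 - D 1) * (A 1 - D 1))) * (A 1 - D 1))) * hPaFb1
  have hnFb : ((Fb 0 - D 0)^2 + (Fb 1 - D 1)^2) * ((C 0 - A 0)^2 + (C 1 - A 1)^2) = ((C 0 - D 0) * (A 1 - D 1) - (C 1 - D 1) * (A 0 - D 0))^2 :=
    mul_right_cancel₀ hNFb (by linear_combination hnFb2)
  have hnormFb : ‖Fb - D‖ ^ 2 = (Fb 0 - D 0)^2 + (Fb 1 - D 1)^2 := by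
    rw [myNormSq]; simp
  have hcpBp0 : Bp 0 = D 0 + r ^ 2 / ((Fb 0 - D 0)^2 + (Fb 1 - D 1)^2) * (Fb 0 - D 0) := by
    rw [hBp]; simp only [invPt, hnormFb, PiLp.add_apply, PiLp.smul_apply, PiLp.sub_apply, smul_eq_mul]
  have hcpBp1 : Bp 1 = D 1 + r ^ 2 / ((Fb 0 - D 0)^2 + (Fb 1 - D 1)^2) * (Fb 1 - D 1) := by
    rw [hBp]; simp only [invPt, hnormFb, PiLp.add_apply, PiLp.smul_apply, PiLp.sub_apply, smul_eq_mul]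
  have hqBp0 : (Bp 0 - D 0) * ((Fb 0 - D 0)^2 + (Fb 1 - D 1)^2) = r ^ 2 * (Fb 0 - D 0) := by
    rw [hcpBp0]; field_simp; ring
  have hqBp1 : (Bp 1 - D 1) * ((Fb 0 - D 0)^2 + (Fb 1 - D 1)^2) = r ^ 2 * (Fb 1 - D 1) := by
    rw [hcpBp1]; field_simp; ring
  have hpBp0 : (Bp 0 - D 0) * ((C 0 - D 0) * (A 1 - D 1) - (C 1 - D 1) * (A 0 - D 0))^2 = r ^ 2 * ((((A 0 - D 0)^2 + (A 1 - D 1)^2) - ((C 0 - D 0) * (A 0 - D 0) + (C 1 - D 1) * (A 1 - D 1))) * (C 0 - D 0) + (((C 0 - D 0)^2 + (C 1 - D 1)^2) - ((C 0 - D 0) * (A 0 - D 0) + (C 1 - D 1) * (A 1 - D 1))) * (A 0 - D 0)) := by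
    linear_combination ((C 0 - A 0)^2 + (C 1 - A 1)^2) * hqBp0 + r ^ 2 * hPaFb0 - (Bp 0 - D 0) * hnFb
  have hpBp1 : (Bp 1 - D 1) * ((C 0 - D 0) * (A 1 - D 1) - (C 1 - D 1) * (A 0 - D 0))^2 = r ^ 2 * ((((A 0 - D 0)^2 + (A 1 - D 1)^2) - ((C 0 - D 0) * (A 0 - D 0) + (C 1 - D 1) * (A 1 - D 1))) * (C 1 - D 1) + (((C 0 - D 0)^2 + (C 1 - D 1)^2) - ((C 0 - D 0) * (A 0 - D 0) + (C 1 - D 1) * (A 1 - D 1))) * (A 1 - D 1)) := by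
    linear_combination ((C 0 - A 0)^2 + (C 1 - A 1)^2) * hqBp1 + r ^ 2 * hPaFb1 - (Bp 1 - D 1) * hnFb
  -- foot Fc on line AB, pole Cp
  have hneAB : A ≠ B := by assumption
  have hNFc : (A 0 - B 0)^2 + (A 1 - B 1)^2 ≠ 0 := mySqSumNe hneAB
  obtain ⟨tFc, htFc⟩ := myParam hFc.1
  have hcFc0 : Fc 0 = tFc * (B 0 - A 0) + A 0 := by rw [← htFc]; simp
  have hcFc1 : Fc 1 = tFc * (B 1 - A 1) + A 1 := by rw [← htFc]; simp
  have corthFc : (D 0 - Fc 0) * (A 0 - B 0) + (D 1 - Fc 1) * (A 1 - B 1) = 0 := by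
    have h' := hFc.2
    rw [myInner] at h'
    simpa using h'
  have htFc' : tFc * ((A 0 - B 0)^2 + (A 1 - B 1)^2) = (D 0 - A 0) * (B 0 - A 0) + (D 1 - A 1) * (B 1 - A 1) := by
    linear_combination corthFc + (A 0 - B 0) * hcFc0 + (A 1 - B 1) * hcFc1
  have hPaFc0 : (Fc 0 - D 0) * ((A 0 - B 0)^2 + (A 1 - B 1)^2) = (((B 0 - D 0)^2 + (B 1 - D 1)^2) - ((A 0 - D 0) * (B 0 - D 0) + (A 1 - D 1) * (B 1 - D 1))) * (A 0 - D 0) + (((A 0 - D 0)^2 + (A 1 - D 1)^2) - ((A 0 - D 0) * (B 0 - D 0) + (A 1 - D 1) * (B 1 - D 1))) * (B 0 - D 0) := by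
    linear_combination ((A 0 - B 0)^2 + (A 1 - B 1)^2) * hcFc0 + (B 0 - A 0) * htFc'
  have hPaFc1 : (Fc 1 - D 1) * ((A 0 - B 0)^2 + (A 1 - B 1)^2) = (((B 0 - D 0)^2 + (B 1 - D 1)^2) - ((A 0 - D 0) * (B 0 - D 0) + (A 1 - D 1) * (B 1 - D 1))) * (A 1 - D 1) + (((A 0 - D 0)^2 + (A 1 - D 1)^2) - ((A 0 - D 0) * (B 0 - D 0) + (A 1 - D 1) * (B 1 - D 1))) * (B 1 - D 1) := by
    linear_combination ((A 0 - B 0)^2 + (A 1 - B 1)^2) * hcFc1 + (B 1 - A 1) * htFc'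
  have hFcD : Fc ≠ D := by
    intro h'; apply hDc; rw [← h']; exact hFc.1
  have hnFcne : (Fc 0 - D 0)^2 + (Fc 1 - D 1)^2 ≠ 0 := mySqSumNe hFcD
  have hnFc2 : ((Fc 0 - D 0)^2 + (Fc 1 - D 1)^2) * ((A 0 - B 0)^2 + (A 1 - B 1)^2)^2 = ((A 0 - D 0) * (B 1 - D 1) - (A 1 - D 1) * (B 0 - D 0))^2 * ((A 0 - B 0)^2 + (A 1 - B 1)^2) := by
    linear_combination ((Fc 0 - D 0) * ((A 0 - B 0)^2 + (A 1 - B 1)^2) + ((((B 0 - D 0)^2 + (B 1 - D 1)^2) - ((A 0 - D 0) * (B 0 - D 0) + (A 1 - D 1) * (B 1 - D 1))) * (A 0 - D 0) + (((A 0 - D 0)^2 + (A 1 - D 1)^2) - ((A 0 - D 0) * (B 0 - D 0) + (A 1 - D 1) * (B 1 - D 1))) * (B 0 - D 0))) * hPaFc0 + ((Fc 1 - D 1) * ((A 0 - B 0)^2 + (A 1 - B 1)^2) + ((((B 0 - D 0)^2 + (B 1 - D 1)^2) - ((A 0 - D 0) * (B 0 - D 0) + (A 1 - D 1) * (B 1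 - D 1))) * (A 1 - D 1) + (((A 0 - D 0)^2 + (A 1 - D 1)^2) - ((A 0 - D 0) * (B 0 - D 0) + (A 1 - D 1) * (B 1 - D 1))) * (B 1 - D 1))) * hPaFc1
  have hnFc : ((Fc 0 - D 0)^2 + (Fc 1 - D 1)^2) * ((A 0 - B 0)^2 + (A 1 - B 1)^2) = ((A 0 - D 0) * (B 1 - D 1) - (A 1 - D 1) * (B 0 - D 0))^2 :=
    mul_right_cancel₀ hNFc (by linear_combination hnFc2)
  have hnormFc : ‖Fc - D‖ ^ 2 = (Fc 0 - D 0)^2 + (Fc 1 - D 1)^2 := by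
    rw [myNormSq]; simp
  have hcpCp0 : Cp 0 = D 0 + r ^ 2 / ((Fc 0 - D 0)^2 + (Fc 1 - D 1)^2) * (Fc 0 - D 0) := by
    rw [hCp]; simp only [invPt, hnormFc, PiLp.add_apply, PiLp.smul_apply, PiLp.sub_apply, smul_eq_mul]
  have hcpCp1 : Cp 1 = D 1 + r ^ 2 / ((Fc 0 - D 0)^2 + (Fc 1 - D 1)^2) * (Fc 1 - D 1) := by
    rw [hCp]; simp only [invPt, hnormFc, PiLp.add_apply, PiLp.smul_apply, PiLp.sub_apply, smul_eq_mul]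
  have hqCp0 : (Cp 0 - D 0) * ((Fc 0 - D 0)^2 + (Fc 1 - D 1)^2) = r ^ 2 * (Fc 0 - D 0) := by
    rw [hcpCp0]; field_simp; ring
  have hqCp1 : (Cp 1 - D 1) * ((Fc 0 - D 0)^2 + (Fc 1 - D 1)^2) = r ^ 2 * (Fc 1 - D 1) := by
    rw [hcpCp1]; field_simp; ring
  have hpCp0 : (Cp 0 - D 0) * ((A 0 - D 0) * (B 1 - D 1) - (A 1 - D 1) * (B 0 - D 0))^2 = r ^ 2 * ((((B 0 - D 0)^2 + (B 1 - D 1)^2) - ((A 0 - D 0) * (B 0 - D 0) + (A 1 - D 1) * (B 1 - D 1))) * (A 0 - D 0) + (((A 0 - D 0)^2 + (A 1 - D 1)^2) - ((A 0 - D 0) * (B 0 - D 0) + (A 1 - D 1) * (B 1 - D 1))) * (B 0 - D 0)) := by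
    linear_combination ((A 0 - B 0)^2 + (A 1 - B 1)^2) * hqCp0 + r ^ 2 * hPaFc0 - (Cp 0 - D 0) * hnFc
  have hpCp1 : (Cp 1 - D 1) * ((A 0 - D 0) * (B 1 - D 1) - (A 1 - D 1) * (B 0 - D 0))^2 = r ^ 2 * ((((B 0 - D 0)^2 + (B 1 - D 1)^2) - ((A 0 - D 0) * (B 0 - D 0) + (A 1 - D 1) * (B 1 - D 1))) * (A 1 - D 1) + (((A 0 - D 0)^2 + (A 1 - D 1)^2) - ((A 0 - D 0) * (B 0 - D 0) + (A 1 - D 1) * (B 1 - D 1))) * (B 1 - D 1)) := by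
    linear_combination ((A 0 - B 0)^2 + (A 1 - B 1)^2) * hqCp1 + r ^ 2 * hPaFc1 - (Cp 1 - D 1) * hnFc
  have K1 := key_cross (A 0 - D 0) (A 1 - D 1) (B 0 - D 0) (B 1 - D 1) (C 0 - D 0) (C 1 - D 1) (r ^ 2)
    (A' 0 - D 0) (A' 1 - D 1) (B' 0 - D 0) (B' 1 - D 1)
    (Ap 0 - D 0) (Ap 1 - D 1) (Bp 0 - D 0) (Bp 1 - D 1)
    hf hg
    (by linear_combination cha'0) (by linear_combination cha'1)
    (by linear_combination chb'0) (by linear_combination chb'1)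
    (by linear_combination hpAp0) (by linear_combination hpAp1)
    (by linear_combination hpBp0) (by linear_combination hpBp1)
  have hcrK1 : (A' 0 - B' 0) * (Ap 1 - Bp 1) - (A' 1 - B' 1) * (Ap 0 - Bp 0) = 0 := by
    linear_combination K1
  have K2 := key_cross (B 0 - D 0) (B 1 - D 1) (C 0 - D 0) (C 1 - D 1) (A 0 - D 0) (A 1 - D 1) (r ^ 2)
    (B' 0 - D 0) (B' 1 - D 1) (C' 0 - D 0) (C' 1 - D 1)
    (Bp 0 - D 0) (Bp 1 - D 1) (Cp 0 - D 0) (Cp 1 - D 1)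
    hg he
    (by linear_combination chb'0) (by linear_combination chb'1)
    (by linear_combination chc'0) (by linear_combination chc'1)
    (by linear_combination hpBp0) (by linear_combination hpBp1)
    (by linear_combination hpCp0) (by linear_combination hpCp1)
  have hcrK2 : (B' 0 - C' 0) * (Bp 1 - Cp 1) - (B' 1 - C' 1) * (Bp 0 - Cp 0) = 0 := by
    linear_combination K2
  have K3 := key_cross (C 0 - D 0) (C 1 - D 1) (A 0 - D 0) (A 1 - D 1) (B 0 - D 0) (B 1 - D 1) (r ^ 2)
    (C' 0 - D 0) (C' 1 - D 1) (A' 0 - D 0) (A' 1 - D 1)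
    (Cp 0 - D 0) (Cp 1 - D 1) (Ap 0 - D 0) (Ap 1 - D 1)
    he hf
    (by linear_combination chc'0) (by linear_combination chc'1)
    (by linear_combination cha'0) (by linear_combination cha'1)
    (by linear_combination hpCp0) (by linear_combination hpCp1)
    (by linear_combination hpAp0) (by linear_combination hpAp1)
  have hcrK3 : (C' 0 - A' 0) * (Cp 1 - Ap 1) - (C' 1 - A' 1) * (Cp 0 - Ap 0) = 0 := by
    linear_combination K3
  -- the polar triangle is nondegenerate
  have hpcr : (Bp 0 - Ap 0) * (Cp 1 - Ap 1) - (Bp 1 - Ap 1) * (Cp 0 - Ap 0) ≠ 0 :=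
    myNcol hpnc
  have hABpne : Ap - Bp ≠ (0 : Pt) := by
    intro h0; rw [sub_eq_zero] at h0; apply hpcr; rw [h0]; ring
  have hBCpne : Bp - Cp ≠ (0 : Pt) := by
    intro h0; rw [sub_eq_zero] at h0; apply hpcr; rw [h0]; ring
  have hCApne : Cp - Ap ≠ (0 : Pt) := by
    intro h0; rw [sub_eq_zero] at h0; apply hpcr; rw [h0]; ring
  obtain ⟨k1, hk1⟩ := mySmul (u := A' - B') hABpne (by simp only [PiLp.sub_apply]; linear_combination hcrK1)
  obtain ⟨k2, hk2⟩ := mySmul (u := B' - C') hBCpne (by simp only [PiLp.sub_apply]; linear_combination hcrK2)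
  obtain ⟨k3, hk3⟩ := mySmul (u := C' - A') hCApne (by simp only [PiLp.sub_apply]; linear_combination hcrK3)
  have hsum : k1 • (Ap - Bp) + k2 • (Bp - Cp) + k3 • (Cp - Ap) = (0 : Pt) := by
    rw [← hk1, ← hk2, ← hk3]; abel
  have hs0 : k1 * (Ap 0 - Bp 0) + k2 * (Bp 0 - Cp 0) + k3 * (Cp 0 - Ap 0) = 0 := by
    have h' : (k1 • (Ap - Bp) + k2 • (Bp - Cp) + k3 • (Cp - Ap)) 0 = (0 : Pt) 0 := by
      rw [hsum]
    simpa using h'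
  have hs1 : k1 * (Ap 1 - Bp 1) + k2 * (Bp 1 - Cp 1) + k3 * (Cp 1 - Ap 1) = 0 := by
    have h' : (k1 • (Ap - Bp) + k2 • (Bp - Cp) + k3 • (Cp - Ap)) 1 = (0 : Pt) 1 := by
      rw [hsum]
    simpa using h'
  have h13 : (k1 - k3) * ((Bp 0 - Ap 0) * (Cp 1 - Ap 1) - (Bp 1 - Ap 1) * (Cp 0 - Ap 0)) = 0 := by
    linear_combination (Bp 1 - Cp 1) * hs0 - (Bp 0 - Cp 0) * hs1
  have h23 : (k2 - k3) * ((Bp 0 - Ap 0) * (Cp 1 - Ap 1) - (Bp 1 - Ap 1) * (Cp 0 - Ap 0)) = 0 := by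
    linear_combination (Ap 0 - Bp 0) * hs1 - (Ap 1 - Bp 1) * hs0
  have e13 : k1 = k3 := by
    have := (mul_eq_zero.mp h13).resolve_right hpcr; linarith
  have e23 : k2 = k3 := by
    have := (mul_eq_zero.mp h23).resolve_right hpcr; linarith
  have hk1ne : k1 ≠ 0 := by
    intro h0
    apply hd1
    rw [← sub_eq_zero]
    rw [hk1, h0, zero_smul]
  exact ⟨k1, hk1ne, hk1, by rw [e13, ← e23]; exact hk2, by rw [e13]; exact hk3⟩
end
end

section
/- Let A, B, C be noncollinear points in the Euclidean plane, let D be a point with D ∉ {A, B, C} and D not on the lines CA and AB, and let r > 0, with ι the inversion of center D and radius r. Let B_p = ι(F_B) and C_p = ι(F_C), where F_B and F_C are the orthogonal projections of D onto the lines CA and AB respectively. Then B_p and C_p both lie on the polar of A, i.e. ⟪B_p − ι(A), A − D⟫ = 0 and ⟪C_p − ι(A), A − D⟫ = 0; in particular ⟪B_p − C_p, A − D⟫ = 0, so that when B_p ≠ C_p the line B_pC_p is the polar of A and is perpendicular to the line DA. -/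
open EuclideanGeometry

noncomputable section

lemma key (D A X F : Pt) (r : ℝ) (hDA : D ≠ A) (hDF : D ≠ F)
    (hmem : F ∈ L X A) (hperp : (inner ℝ (D - F) (X - A) : ℝ) = 0) :
    (inner ℝ (invPt D r F - invPt D r A) (A - D) : ℝ) = 0 := by
  have hdir : F -ᵥ A ∈ (affineSpan ℝ ({X, A} : Set Pt)).direction :=
    AffineSubspace.vsub_mem_direction hmem (right_mem_affineSpan_pair ℝ X A)
  rw [direction_affineSpan, vectorSpan_pair] at hdir
  obtain ⟨t, ht⟩ := Submodule.mem_span_singleton.1 hdir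
  have hFA : F - A = t • (X - A) := by
    have := ht
    simp only [vsub_eq_sub] at this
    rw [← this]
  have hFD : ‖F - D‖ ≠ 0 := by
    simpa [sub_eq_zero] using fun h => hDF (h.symm)
  have hAD : ‖A - D‖ ≠ 0 := by
    simpa [sub_eq_zero] using fun h => hDA (h.symm)
  have h0 : (inner ℝ (F - D) (A - F) : ℝ) = 0 := by
    have hAF : A - F = (-t) • (X - A) := by
      rw [neg_smul, ← hFA]; abel
    rw [hAF, real_inner_smul_right]
    have : (inner ℝ (F - D) (X - A) : ℝ) = 0 := by
      have := hperp
      rwa [show D - F = -(F - D) by abel, inner_neg_left, neg_eq_zero] at this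
    rw [this, mul_zero]
  have h1 : (inner ℝ (F - D) (A - D) : ℝ) = ‖F - D‖ ^ 2 := by
    have : A - D = (A - F) + (F - D) := by abel
    rw [this, inner_add_right, h0, zero_add, real_inner_self_eq_norm_sq]
  have h2 : (inner ℝ (A - D) (A - D) : ℝ) = ‖A - D‖ ^ 2 := real_inner_self_eq_norm_sq _
  simp only [invPt, add_sub_add_left_eq_sub, ← smul_sub]
  rw [show (r ^ 2 / ‖F - D‖ ^ 2) • (F - D) - (r ^ 2 / ‖A - D‖ ^ 2) • (A - D)
      = (r ^ 2 / ‖F - D‖ ^ 2) • (F - D) + (-(r ^ 2 / ‖A - D‖ ^ 2)) • (A - D) by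
        rw [neg_smul]; abel]
  rw [inner_add_left, real_inner_smul_left, real_inner_smul_left, h1, h2]
  field_simp
  ring

/-- Key step in Proposition 4.6: the poles `Bp`, `Cp` of the sides `CA`, `AB` through the
vertex `A` lie on the polar of `A`, which is perpendicular to `DA`. -/
theorem poles_of_sides_on_polar_of_vertex
    (A B C D : Pt) (r : ℝ) (hr : 0 < r)
    (hABC : ¬ Collinear ℝ ({A, B, C} : Set Pt))
    (hDv : D ∉ ({A, B, C} : Set Pt))
    (hDb : D ∉ L C A) (hDc : D ∉ L A B)
    (Fb Fc Bp Cp : Pt)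
    (hFb : IsFoot D C A Fb) (hFc : IsFoot D A B Fc)
    (hBp : Bp = invPt D r Fb) (hCp : Cp = invPt D r Fc) :
    (inner ℝ (Bp - invPt D r A) (A - D) : ℝ) = 0 ∧
    (inner ℝ (Cp - invPt D r A) (A - D) : ℝ) = 0 ∧
    (inner ℝ (Bp - Cp) (A - D) : ℝ) = 0 := by
  have hDA : D ≠ A := by
    intro h; exact hDv (by simp [h])
  have hDFb : D ≠ Fb := by
    intro h; exact hDb (h ▸ hFb.1)
  have hDFc : D ≠ Fc := by
    intro h; exact hDc (h ▸ hFc.1)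
  have hb : (inner ℝ (Bp - invPt D r A) (A - D) : ℝ) = 0 := by
    rw [hBp]; exact key D A C Fb r hDA hDFb hFb.1 hFb.2
  have hc : (inner ℝ (Cp - invPt D r A) (A - D) : ℝ) = 0 := by
    rw [hCp]
    have hmem : Fc ∈ L B A := by
      have := hFc.1
      simpa [L, Set.pair_comm] using this
    have hperp : (inner ℝ (D - Fc) (B - A) : ℝ) = 0 := by
      have := hFc.2
      rwa [show A - B = -(B - A) by abel, inner_neg_right, neg_eq_zero] at this
    exact key D A B Fc r hDA hDFc hmem hperp
  refine ⟨hb, hc, ?_⟩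
  have : Bp - Cp = (Bp - invPt D r A) - (Cp - invPt D r A) := by abel
  rw [this, inner_sub_left, hb, hc, sub_zero]
end
end
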